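/- arXiv:2501.03816 — 4 statements merged into one kernel-verified Lean document; each statement's English description precedes it below -/
import Mathlib

section
/- Let D be a positive, 1-periodic, C² function that is not constant, and let q ∈ ℝ with q ≠ 0. Then there exists a continuous 1-periodic function r : ℝ → ℝ with the following property: whenever, for every λ ∈ ℝ, (k(λ), ψ_λ) is a principal eigenpair of L_q^λ[r;D] and (k₀(λ), φ_λ) is a principal eigenpair of L_0^λ[r;D], one has k(0) < k₀(0), and moreover 0 < inf_{λ>0} k(λ)/λ < inf_{λ>0} k₀(λ)/λ. -/
open Real MeasureTheory Set Filter Topology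

noncomputable section

/-- The operator `L_q^λ[r;D]` acting on C² functions `ψ`:
`(L_q^λ[r;D]ψ)(x) = D ψ'' + ((1+q)D' − 2λD) ψ' + (qD'' + λ²D − (1+q)λD' + r) ψ`. -/
def Lop (q lam : ℝ) (r D ψ : ℝ → ℝ) (x : ℝ) : ℝ :=
  D x * deriv (deriv ψ) x + ((1 + q) * deriv D x - 2 * lam * D x) * deriv ψ x +
    (q * deriv (deriv D) x + lam ^ 2 * D x - (1 + q) * lam * deriv D x + r x) * ψ x

/-- `(k, ψ)` is a principal eigenpair of `L_q^λ[r;D]`: `ψ` is a positive, 1-periodic,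
C² function with `L_q^λ[r;D]ψ = kψ`. -/
def IsEigenpair (q lam : ℝ) (r D : ℝ → ℝ) (k : ℝ) (ψ : ℝ → ℝ) : Prop :=
  ContDiff ℝ 2 ψ ∧ (∀ x, 0 < ψ x) ∧ Function.Periodic ψ 1 ∧
    ∀ x, Lop q lam r D ψ x = k * ψ x

/-- The Freidlin–Gärtner infimum `inf_{λ>0} k(λ)/λ`, as an extended real number. -/
def speed (k : ℝ → ℝ) : EReal := ⨅ l : {l : ℝ // 0 < l}, ((k l.1 / l.1 : ℝ) : EReal)

def Gfun (D ψ : ℝ → ℝ) (q' lam : ℝ) : ℝ → ℝ :=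
  fun y => D y * deriv ψ y / ψ y + q' * deriv D y / 2 - lam * D y

lemma deriv_contDiff_one {f : ℝ → ℝ} (hf : ContDiff ℝ 2 f) : ContDiff ℝ 1 (deriv f) := by
  have h2 : ContDiff ℝ ((1 : WithTop ℕ∞) + 1) f := by norm_num; exact hf
  exact (contDiff_succ_iff_deriv.mp h2).2.2

lemma periodic_deriv' (f : ℝ → ℝ) (hf : Function.Periodic f 1) :
    Function.Periodic (deriv f) 1 := by
  intro x
  have hfun : (fun y : ℝ => f (y + 1)) = f := funext fun y => hf y
  calc deriv f (x + 1) = deriv (fun y => f (y + 1)) x := (deriv_comp_add_const f 1 x).symm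
    _ = deriv f x := by rw [hfun]

lemma integral_deriv_periodic_zero (f f' : ℝ → ℝ) (a : ℝ)
    (h : ∀ x, HasDerivAt f (f' x) x) (hc : Continuous f') (hper : f (a + 1) = f a) :
    ∫ x in a..(a+1), f' x = 0 := by
  rw [intervalIntegral.integral_eq_sub_of_hasDerivAt (fun x _ => h x)
    (hc.intervalIntegrable _ _), hper, sub_self]

lemma G_hasDerivAt (D : ℝ → ℝ) (hD : ContDiff ℝ 2 D) (hDpos : ∀ x, 0 < D x)
    (r : ℝ → ℝ) (q' lam k : ℝ) (ψ : ℝ → ℝ) (hψ : ContDiff ℝ 2 ψ) (hψpos : ∀ x, 0 < ψ x)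
    (heq : ∀ x, Lop q' lam r D ψ x = k * ψ x) (x : ℝ) :
    HasDerivAt (Gfun D ψ q' lam)
      (k - r x - q'/2 * deriv (deriv D) x + q'^2/4 * (deriv D x)^2 / D x
        - (Gfun D ψ q' lam x)^2 / D x) x := by
  have hDd : Differentiable ℝ D := hD.differentiable (by norm_num)
  have hd1d : Differentiable ℝ (deriv D) := (deriv_contDiff_one hD).differentiable (by norm_num)
  have hψd : Differentiable ℝ ψ := hψ.differentiable (by norm_num)
  have hψ1d : Differentiable ℝ (deriv ψ) := (deriv_contDiff_one hψ).differentiable (by norm_num)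
  have ha : HasDerivAt (fun y => D y * deriv ψ y)
      (deriv D x * deriv ψ x + D x * deriv (deriv ψ) x) x :=
    ((hDd x).hasDerivAt).mul ((hψ1d x).hasDerivAt)
  have hb : HasDerivAt (fun y => D y * deriv ψ y / ψ y)
      (((deriv D x * deriv ψ x + D x * deriv (deriv ψ) x) * ψ x
        - D x * deriv ψ x * deriv ψ x) / ψ x ^ 2) x :=
    ha.div ((hψd x).hasDerivAt) (ne_of_gt (hψpos x))
  have hc : HasDerivAt (fun y => q' * deriv D y / 2) (q' * deriv (deriv D) x / 2) x :=
    (((hd1d x).hasDerivAt).const_mul q').div_const 2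
  have hd : HasDerivAt (fun y => lam * D y) (lam * deriv D x) x :=
    ((hDd x).hasDerivAt).const_mul lam
  have htot := (hb.add hc).sub hd
  refine htot.congr_deriv (Eq.symm ?_)
  have hh := heq x
  simp only [Lop] at hh
  have hψne : ψ x ≠ 0 := ne_of_gt (hψpos x)
  have hDne : D x ≠ 0 := ne_of_gt (hDpos x)
  simp only [Gfun]
  field_simp
  linear_combination (-16 * D x * ψ x) * hh

lemma eigen_key (D : ℝ → ℝ) (hD : ContDiff ℝ 2 D) (hDpos : ∀ x, 0 < D x)
    (hDper : Function.Periodic D 1) (r : ℝ → ℝ) (hr : Continuous r)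
    (q' lam k : ℝ) (ψ : ℝ → ℝ) (hep : IsEigenpair q' lam r D k ψ) :
    k = (∫ x in (0:ℝ)..1, r x) - q'^2/4 * (∫ x in (0:ℝ)..1, (deriv D x)^2 / D x)
        + (∫ x in (0:ℝ)..1, (Gfun D ψ q' lam x)^2 / D x)
      ∧ (∫ x in (0:ℝ)..1, Gfun D ψ q' lam x / D x) = -lam := by
  obtain ⟨hψ, hψpos, hψper, heq⟩ := hep
  have hDd : Differentiable ℝ D := hD.differentiable (by norm_num)
  have hd1d : Differentiable ℝ (deriv D) := (deriv_contDiff_one hD).differentiable (by norm_num)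
  have hψd : Differentiable ℝ ψ := hψ.differentiable (by norm_num)
  have hDc : Continuous D := hD.continuous
  have hd1c : Continuous (deriv D) := hD.continuous_deriv (by norm_num)
  have hd2c : Continuous (deriv (deriv D)) := (deriv_contDiff_one hD).continuous_deriv le_rfl
  have hψc : Continuous ψ := hψ.continuous
  have hψ1c : Continuous (deriv ψ) := hψ.continuous_deriv (by norm_num)
  have hψne : ∀ x, ψ x ≠ 0 := fun x => ne_of_gt (hψpos x)
  have hDne : ∀ x, D x ≠ 0 := fun x => ne_of_gt (hDpos x)
  have hd1per : Function.Periodic (deriv D) 1 := periodic_deriv' D hDper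
  have hψ1per : Function.Periodic (deriv ψ) 1 := periodic_deriv' ψ hψper
  set G := Gfun D ψ q' lam with hGdef
  have hGc : Continuous G := by
    apply Continuous.sub
    apply Continuous.add
    · exact (hDc.mul hψ1c).div hψc hψne
    · exact ((continuous_const.mul hd1c).div_const 2)
    · exact continuous_const.mul hDc
  have hGper : G 1 = G 0 := by
    show Gfun D ψ q' lam 1 = Gfun D ψ q' lam 0
    have h1 : (1:ℝ) = 0 + 1 := by norm_num
    rw [h1]
    simp only [Gfun]
    rw [hDper 0, hψper 0, hd1per 0, hψ1per 0]
  -- the "stuff" function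
  set st : ℝ → ℝ := fun x => r x + q'/2 * deriv (deriv D) x - q'^2/4 * (deriv D x)^2 / D x
      + (G x)^2 / D x with hstdef
  have hstc : Continuous st := by
    apply Continuous.add
    apply Continuous.sub
    apply Continuous.add hr
    · exact (continuous_const.mul hd2c)
    · exact (continuous_const.mul (hd1c.pow 2)).div hDc hDne
    · exact (hGc.pow 2).div hDc hDne
  have hzero : ∫ x in (0:ℝ)..1, (k - st x) = 0 := by
    have h0 := integral_deriv_periodic_zero G (fun x => k - st x) 0
      (fun x => by
        have := G_hasDerivAt D hD hDpos r q' lam k ψ hψ hψpos heq x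
        convert this using 1
        simp only [hstdef]
        ring)
      (continuous_const.sub hstc)
      (by rw [zero_add, hGper])
    rw [zero_add] at h0
    exact h0
  have hksplit : k = ∫ x in (0:ℝ)..1, st x := by
    have hik : IntervalIntegrable (fun _ : ℝ => k) volume 0 1 :=
      continuous_const.intervalIntegrable 0 1
    have hist : IntervalIntegrable st volume 0 1 := hstc.intervalIntegrable 0 1
    rw [intervalIntegral.integral_sub hik hist] at hzero
    simp at hzero
    linarith
  constructor
  · rw [hksplit]
    have hs1 : ∫ x in (0:ℝ)..1, st x
        = (∫ x in (0:ℝ)..1, (r x + q'/2 * deriv (deriv D) x - q'^2/4 * (deriv D x)^2 / D x))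
          + ∫ x in (0:ℝ)..1, (G x)^2 / D x := by
      apply intervalIntegral.integral_add
      · exact ((hr.add (continuous_const.mul hd2c)).sub
          ((continuous_const.mul (hd1c.pow 2)).div hDc hDne)).intervalIntegrable 0 1
      · exact ((hGc.pow 2).div hDc hDne).intervalIntegrable 0 1
    rw [hs1]
    have hs2 : ∫ x in (0:ℝ)..1, (r x + q'/2 * deriv (deriv D) x - q'^2/4 * (deriv D x)^2 / D x)
        = (∫ x in (0:ℝ)..1, (r x + q'/2 * deriv (deriv D) x))
          - ∫ x in (0:ℝ)..1, q'^2/4 * (deriv D x)^2 / D x := by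
      apply intervalIntegral.integral_sub
      · exact (hr.add (continuous_const.mul hd2c)).intervalIntegrable 0 1
      · exact ((continuous_const.mul (hd1c.pow 2)).div hDc hDne).intervalIntegrable 0 1
    rw [hs2]
    have hs3 : ∫ x in (0:ℝ)..1, (r x + q'/2 * deriv (deriv D) x)
        = (∫ x in (0:ℝ)..1, r x) + ∫ x in (0:ℝ)..1, q'/2 * deriv (deriv D) x := by
      apply intervalIntegral.integral_add
      · exact hr.intervalIntegrable 0 1
      · exact (continuous_const.mul hd2c).intervalIntegrable 0 1
    rw [hs3]
    have hd2zero : ∫ x in (0:ℝ)..1, deriv (deriv D) x = 0 := by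
      have h0 := integral_deriv_periodic_zero (deriv D) (deriv (deriv D)) 0
        (fun x => (hd1d x).hasDerivAt) hd2c (by simpa using hd1per 0)
      rw [zero_add] at h0
      exact h0
    have hs4 : ∫ x in (0:ℝ)..1, q'/2 * deriv (deriv D) x = 0 := by
      rw [intervalIntegral.integral_const_mul, hd2zero, mul_zero]
    have hs5 : ∫ x in (0:ℝ)..1, q'^2/4 * (deriv D x)^2 / D x
        = q'^2/4 * ∫ x in (0:ℝ)..1, (deriv D x)^2 / D x := by
      rw [← intervalIntegral.integral_const_mul]
      congr 1
      funext x
      ring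
    rw [hs4, hs5]
    ring
  · -- ∫ G/D = -lam
    have hpt : (fun x => G x / D x)
        = fun x => (deriv ψ x / ψ x + q'/2 * (deriv D x / D x)) - lam := by
      funext x
      have h1 := hψne x
      have h2 := hDne x
      simp only [hGdef, Gfun]
      field_simp
    rw [hpt]
    have hi1 : ∫ x in (0:ℝ)..1, deriv ψ x / ψ x = 0 := by
      have h0 := integral_deriv_periodic_zero (fun x => Real.log (ψ x))
        (fun x => deriv ψ x / ψ x) 0
        (fun x => ((hψd x).hasDerivAt).log (hψne x))
        (hψ1c.div hψc hψne)
        (show Real.log (ψ (0+1)) = Real.log (ψ 0) from by rw [hψper 0])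
      rw [zero_add] at h0
      exact h0
    have hi2 : ∫ x in (0:ℝ)..1, q'/2 * (deriv D x / D x) = 0 := by
      rw [intervalIntegral.integral_const_mul]
      have h0 := integral_deriv_periodic_zero (fun x => Real.log (D x))
        (fun x => deriv D x / D x) 0
        (fun x => ((hDd x).hasDerivAt).log (hDne x))
        (hd1c.div hDc hDne)
        (show Real.log (D (0+1)) = Real.log (D 0) from by rw [hDper 0])
      rw [zero_add] at h0
      rw [h0, mul_zero]
    rw [intervalIntegral.integral_sub, intervalIntegral.integral_add, hi1, hi2]
    · simp
    · exact (hψ1c.div hψc hψne).intervalIntegrable 0 1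
    · exact (continuous_const.mul (hd1c.div hDc hDne)).intervalIntegrable 0 1
    · exact ((hψ1c.div hψc hψne).add
        (continuous_const.mul (hd1c.div hDc hDne))).intervalIntegrable 0 1
    · exact continuous_const.intervalIntegrable 0 1

/-- a continuous function with zero integral on [0,1] has a zero in [0,1] -/
lemma exists_zero_of_integral_zero (f : ℝ → ℝ) (hc : Continuous f)
    (hi : ∫ x in (0:ℝ)..1, f x = 0) : ∃ x₀ ∈ Icc (0:ℝ) 1, f x₀ = 0 := by
  by_contra hcon
  push_neg at hcon
  have h0 : f 0 ≠ 0 := hcon 0 (by norm_num)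
  have key : ∀ y ∈ Icc (0:ℝ) 1, 0 < f 0 → 0 < f y := by
    intro y hy hpos
    rcases lt_trichotomy (f y) 0 with hlt | heq | hgt
    · exfalso
      have : (0:ℝ) ∈ uIcc (f 0) (f y) := by
        rw [Set.mem_uIcc]; right; constructor <;> linarith
      obtain ⟨z, hz, hfz⟩ := intermediate_value_uIcc (hc.continuousOn) this
      have hzIcc : z ∈ Icc (0:ℝ) 1 := by
        have hs : uIcc (0:ℝ) y ⊆ Icc 0 1 := by
          rw [Set.uIcc_of_le hy.1]
          exact Icc_subset_Icc le_rfl hy.2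
        exact hs hz
      exact hcon z hzIcc hfz
    · exact absurd heq (hcon y hy)
    · exact hgt
  have key' : ∀ y ∈ Icc (0:ℝ) 1, f 0 < 0 → f y < 0 := by
    intro y hy hneg
    rcases lt_trichotomy (f y) 0 with hlt | heq | hgt
    · exact hlt
    · exact absurd heq (hcon y hy)
    · exfalso
      have : (0:ℝ) ∈ uIcc (f 0) (f y) := by
        rw [Set.mem_uIcc]; left; constructor <;> linarith
      obtain ⟨z, hz, hfz⟩ := intermediate_value_uIcc (hc.continuousOn) this
      have hzIcc : z ∈ Icc (0:ℝ) 1 := by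
        have hs : uIcc (0:ℝ) y ⊆ Icc 0 1 := by
          rw [Set.uIcc_of_le hy.1]
          exact Icc_subset_Icc le_rfl hy.2
        exact hs hz
      exact hcon z hzIcc hfz
  rcases h0.lt_or_gt with hneg | hpos
  · have hlt : (0:ℝ) < ∫ x in (0:ℝ)..1, -f x := by
      apply intervalIntegral.intervalIntegral_pos_of_pos_on
        ((hc.neg).intervalIntegrable _ _)
      · intro x hx
        have := key' x ⟨le_of_lt hx.1, le_of_lt hx.2⟩ hneg
        show 0 < -f x
        linarith
      · norm_num
    rw [intervalIntegral.integral_neg, hi] at hlt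
    norm_num at hlt
  · have hlt : (0:ℝ) < ∫ x in (0:ℝ)..1, f x := by
      apply intervalIntegral.intervalIntegral_pos_of_pos_on (hc.intervalIntegrable _ _)
      · intro x hx
        exact key x ⟨le_of_lt hx.1, le_of_lt hx.2⟩ hpos
      · norm_num
    rw [hi] at hlt
    norm_num at hlt

lemma cs_bound (D G : ℝ → ℝ) (hDc : Continuous D) (hDpos : ∀ x, 0 < D x) (hGc : Continuous G)
    (lam : ℝ) (hint : (∫ x in (0:ℝ)..1, G x / D x) = -lam) :
    lam^2 / (∫ x in (0:ℝ)..1, (D x)⁻¹) ≤ ∫ x in (0:ℝ)..1, (G x)^2 / D x := by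
  have hDne : ∀ x, D x ≠ 0 := fun x => ne_of_gt (hDpos x)
  set A := ∫ x in (0:ℝ)..1, (D x)⁻¹ with hAdef
  have hA : 0 < A := by
    apply intervalIntegral.intervalIntegral_pos_of_pos_on
      ((hDc.inv₀ hDne).intervalIntegrable _ _)
    · intro x _; exact inv_pos.mpr (hDpos x)
    · norm_num
  have hAne : A ≠ 0 := ne_of_gt hA
  have hnn : (0:ℝ) ≤ ∫ x in (0:ℝ)..1, (G x + lam/A)^2 / D x :=
    intervalIntegral.integral_nonneg (by norm_num)
      (fun u _ => div_nonneg (sq_nonneg _) (le_of_lt (hDpos u)))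
  have hexp : (fun x => (G x + lam/A)^2 / D x)
      = fun x => ((G x)^2/D x + (2*lam/A) * (G x / D x)) + (lam/A)^2 * (D x)⁻¹ := by
    funext x
    have h1 := hDne x
    field_simp
    ring
  rw [hexp] at hnn
  have hi1 : IntervalIntegrable (fun x => (G x)^2/D x) volume 0 1 :=
    ((hGc.pow 2).div hDc hDne).intervalIntegrable 0 1
  have hi2 : IntervalIntegrable (fun x => (2*lam/A) * (G x / D x)) volume 0 1 :=
    (continuous_const.mul (hGc.div hDc hDne)).intervalIntegrable 0 1
  have hi3 : IntervalIntegrable (fun x => (lam/A)^2 * (D x)⁻¹) volume 0 1 :=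
    (continuous_const.mul (hDc.inv₀ hDne)).intervalIntegrable 0 1
  rw [intervalIntegral.integral_add (hi1.add hi2) hi3,
    intervalIntegral.integral_add hi1 hi2,
    intervalIntegral.integral_const_mul, intervalIntegral.integral_const_mul,
    hint, ← hAdef] at hnn
  have : (2*lam/A) * (-lam) + (lam/A)^2 * A = -lam^2/A := by
    field_simp
    ring
  rw [add_assoc, this, neg_div] at hnn
  linarith [hnn]

lemma eigen_upper (D : ℝ → ℝ) (hD : ContDiff ℝ 2 D) (hDpos : ∀ x, 0 < D x)
    (hDper : Function.Periodic D 1) (q c : ℝ) (r : ℝ → ℝ) (hr : Continuous r)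
    (hrdef : ∀ x, r x = c - q/2 * deriv (deriv D) x + q^2/4 * (deriv D x)^2 / D x)
    (m : ℝ) (hm : 0 < m) (hmD : ∀ x ∈ Icc (0:ℝ) 2, m ≤ D x)
    (lam k : ℝ) (ψ : ℝ → ℝ) (hep : IsEigenpair q lam r D k ψ) :
    k ≤ c + lam^2 / ((∫ x in (0:ℝ)..1, (D x)⁻¹)^2 * m) := by
  obtain ⟨hψ, hψpos, hψper, heq⟩ := hep
  have hDc : Continuous D := hD.continuous
  have hd1c : Continuous (deriv D) := hD.continuous_deriv (by norm_num)
  have hψc : Continuous ψ := hψ.continuous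
  have hψ1c : Continuous (deriv ψ) := hψ.continuous_deriv (by norm_num)
  have hψne : ∀ x, ψ x ≠ 0 := fun x => ne_of_gt (hψpos x)
  have hDne : ∀ x, D x ≠ 0 := fun x => ne_of_gt (hDpos x)
  have hd1per : Function.Periodic (deriv D) 1 := periodic_deriv' D hDper
  have hψ1per : Function.Periodic (deriv ψ) 1 := periodic_deriv' ψ hψper
  set A := ∫ x in (0:ℝ)..1, (D x)⁻¹ with hAdef
  have hA : 0 < A := by
    apply intervalIntegral.intervalIntegral_pos_of_pos_on
      ((hDc.inv₀ hDne).intervalIntegrable _ _)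
    · intro x _; exact inv_pos.mpr (hDpos x)
    · norm_num
  have hAne : A ≠ 0 := ne_of_gt hA
  set G := Gfun D ψ q lam with hGdef
  have hGc : Continuous G := by
    apply Continuous.sub
    apply Continuous.add
    · exact (hDc.mul hψ1c).div hψc hψne
    · exact ((continuous_const.mul hd1c).div_const 2)
    · exact continuous_const.mul hDc
  have hGper : Function.Periodic G 1 := by
    intro x
    show Gfun D ψ q lam (x+1) = Gfun D ψ q lam x
    simp only [Gfun]
    rw [hDper x, hψper x, hd1per x, hψ1per x]
  -- integral of G/D
  have hkey := eigen_key D hD hDpos hDper r hr q lam k ψ ⟨hψ, hψpos, hψper, heq⟩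
  have hGint : (∫ x in (0:ℝ)..1, G x / D x) = -lam := hkey.2
  -- Riccati form of the derivative
  have hGder : ∀ x, HasDerivAt G (k - c - (G x)^2 / D x) x := by
    intro x
    have h := G_hasDerivAt D hD hDpos r q lam k ψ hψ hψpos heq x
    convert h using 1
    rw [hrdef x]
    ring
  -- Z and its zero
  set Z : ℝ → ℝ := fun x => G x + lam/A with hZdef
  have hZc : Continuous Z := hGc.add continuous_const
  have hZper : ∀ x, Z (x+1) = Z x := fun x => by simp only [hZdef]; rw [hGper x]
  have hZint : (∫ x in (0:ℝ)..1, Z x / D x) = 0 := by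
    have hsplit : (fun x => Z x / D x) = fun x => G x / D x + (lam/A) * (D x)⁻¹ := by
      funext x
      have h1 := hDne x
      simp only [hZdef]
      field_simp
    have hi1 : IntervalIntegrable (fun x => G x / D x) volume 0 1 :=
      Continuous.intervalIntegrable (show Continuous fun x => G x / D x from
        hGc.div hDc hDne) 0 1
    have hi2 : IntervalIntegrable (fun x => lam / A * (D x)⁻¹) volume 0 1 :=
      Continuous.intervalIntegrable (continuous_const.mul (hDc.inv₀ hDne)) 0 1
    rw [hsplit, intervalIntegral.integral_add hi1 hi2, hGint,
      intervalIntegral.integral_const_mul, ← hAdef]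
    field_simp
    ring
  obtain ⟨x₀, hx₀mem, hx₀⟩ := exists_zero_of_integral_zero (fun x => Z x / D x)
    (hZc.div hDc hDne) hZint
  have hZx₀ : Z x₀ = 0 := by
    rcases div_eq_zero_iff.mp hx₀ with h | h
    · exact h
    · exact absurd h (hDne x₀)
  have hZx₁ : Z (x₀ + 1) = 0 := by rw [hZper x₀]; exact hZx₀
  have hZder : ∀ x, HasDerivAt Z (k - c - (G x)^2 / D x) x :=
    fun x => (hGder x).add_const _
  -- the integrating factor
  set w : ℝ → ℝ := fun x => (Z x - 2*lam/A) / D x with hwdef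
  have hwc : Continuous w := (hZc.sub continuous_const).div hDc hDne
  set W : ℝ → ℝ := fun x => ∫ t in x₀..x, w t with hWdef
  have hWder : ∀ x, HasDerivAt W (w x) x := fun x => (hwc.integral_hasStrictDerivAt x₀ x).hasDerivAt
  have hWdiff : Differentiable ℝ W := fun x => (hWder x).differentiableAt
  have hWc : Continuous W := hWdiff.continuous
  set F : ℝ → ℝ := fun x => Z x * Real.exp (W x) with hFdef
  have hFder : ∀ x, HasDerivAt F ((k - c - lam^2/(A^2 * D x)) * Real.exp (W x)) x := by
    intro x
    have h1 := (hZder x).mul ((hWder x).exp)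
    refine h1.congr_deriv (Eq.symm ?_)
    have hDx := hDne x
    simp only [hZdef, hwdef]
    field_simp
    ring
  have hADne : ∀ x, A^2 * D x ≠ 0 := fun x => by
    have := hDne x
    positivity
  have hIc : Continuous (fun x => (k - c - lam^2/(A^2 * D x)) * Real.exp (W x)) := by
    apply Continuous.mul
    · exact continuous_const.sub
        (continuous_const.div (continuous_const.mul hDc) hADne)
    · exact Real.continuous_exp.comp hWc
  have hFTC : ∫ x in x₀..(x₀+1), (k - c - lam^2/(A^2*D x)) * Real.exp (W x) = 0 := by
    rw [intervalIntegral.integral_eq_sub_of_hasDerivAt (fun x _ => hFder x)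
      (hIc.intervalIntegrable _ _)]
    show Z (x₀+1) * Real.exp (W (x₀+1)) - Z x₀ * Real.exp (W x₀) = 0
    rw [hZx₁, hZx₀]
    ring
  by_contra hcon
  push_neg at hcon
  have hposint : (0:ℝ) < ∫ x in x₀..(x₀+1), (k - c - lam^2/(A^2*D x)) * Real.exp (W x) := by
    apply intervalIntegral.intervalIntegral_pos_of_pos_on (hIc.intervalIntegrable _ _)
    · intro x hx
      have hxIcc : x ∈ Icc (0:ℝ) 2 := by
        constructor
        · linarith [hx₀mem.1, hx.1]
        · linarith [hx₀mem.2, hx.2]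
      have hDx := hmD x hxIcc
      have hA2m : (0:ℝ) < A^2 * m := by positivity
      have hfrac : lam^2/(A^2 * D x) ≤ lam^2/(A^2*m) := by
        gcongr
      have hpos1 : 0 < k - c - lam^2/(A^2*D x) := by
        have := hcon
        linarith
      exact mul_pos hpos1 (Real.exp_pos _)
    · linarith
  rw [hFTC] at hposint
  norm_num at hposint

lemma Gfun_continuous (D ψ : ℝ → ℝ) (hD : ContDiff ℝ 2 D) (hψ : ContDiff ℝ 2 ψ)
    (hψpos : ∀ x, 0 < ψ x) (q' lam : ℝ) : Continuous (Gfun D ψ q' lam) := by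
  have hψne : ∀ x, ψ x ≠ 0 := fun x => ne_of_gt (hψpos x)
  apply Continuous.sub
  apply Continuous.add
  · exact (hD.continuous.mul (hψ.continuous_deriv (by norm_num))).div hψ.continuous hψne
  · exact ((continuous_const.mul (hD.continuous_deriv (by norm_num))).div_const 2)
  · exact continuous_const.mul hD.continuous

theorem stmt_0 (D : ℝ → ℝ) (hD : ContDiff ℝ 2 D) (hDpos : ∀ x, 0 < D x)
    (hDper : Function.Periodic D 1) (hDnc : ¬ ∃ c, ∀ x, D x = c)
    (q : ℝ) (hq : q ≠ 0) :
    ∃ r : ℝ → ℝ, Continuous r ∧ Function.Periodic r 1 ∧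
      ∀ (k k₀ : ℝ → ℝ) (ψ φ : ℝ → ℝ → ℝ),
        (∀ lam : ℝ, IsEigenpair q lam r D (k lam) (ψ lam)) →
        (∀ lam : ℝ, IsEigenpair 0 lam r D (k₀ lam) (φ lam)) →
        k 0 < k₀ 0 ∧ (0 : EReal) < speed k ∧ speed k < speed k₀ := by
  have hDc : Continuous D := hD.continuous
  have hDdiff : Differentiable ℝ D := hD.differentiable (by norm_num)
  have hd1d : Differentiable ℝ (deriv D) := (deriv_contDiff_one hD).differentiable (by norm_num)
  have hd1c : Continuous (deriv D) := hD.continuous_deriv (by norm_num)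
  have hd2c : Continuous (deriv (deriv D)) := (deriv_contDiff_one hD).continuous_deriv le_rfl
  have hDne : ∀ x, D x ≠ 0 := fun x => ne_of_gt (hDpos x)
  have hd1per : Function.Periodic (deriv D) 1 := periodic_deriv' D hDper
  have hd2per : Function.Periodic (deriv (deriv D)) 1 := periodic_deriv' (deriv D) hd1per
  -- the integral IC = ∫ D'^2/D > 0
  set IC := ∫ x in (0:ℝ)..1, (deriv D x)^2 / D x with hICdef
  have hICpos : 0 < IC := by
    have hne : ∃ x, deriv D x ≠ 0 := by
      by_contra hall
      push_neg at hall
      exact hDnc ⟨D 0, fun x => is_const_of_deriv_eq_zero hDdiff hall x 0⟩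
    obtain ⟨xh, hxh⟩ := hne
    have hfr : deriv D (Int.fract xh) ≠ 0 := by
      have h1 := hd1per.sub_int_mul_eq (x := xh) ⌊xh⌋
      rw [mul_one] at h1
      rw [Int.fract]
      rw [h1]
      exact hxh
    apply intervalIntegral.integral_pos (by norm_num)
    · exact ((hd1c.pow 2).div hDc hDne).continuousOn
    · intro x _
      exact div_nonneg (sq_nonneg _) (hDpos x).le
    · refine ⟨Int.fract xh, ⟨Int.fract_nonneg xh, (Int.fract_lt_one xh).le⟩, ?_⟩
      exact div_pos (by positivity) (hDpos _)
  -- the harmonic integral A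
  set A := ∫ x in (0:ℝ)..1, (D x)⁻¹ with hAdef
  have hA : 0 < A := by
    apply intervalIntegral.intervalIntegral_pos_of_pos_on
      ((hDc.inv₀ hDne).intervalIntegrable _ _)
    · intro x _; exact inv_pos.mpr (hDpos x)
    · norm_num
  -- minimum of D on [0,2]
  obtain ⟨xm, hxmmem, hxmmin⟩ := isCompact_Icc.exists_isMinOn
    (⟨0, by norm_num⟩ : (Icc (0:ℝ) 2).Nonempty) hDc.continuousOn
  set m := D xm with hmdef
  have hm : 0 < m := hDpos xm
  have hmD : ∀ x ∈ Icc (0:ℝ) 2, m ≤ D x := fun x hx => hxmmin hx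
  -- the constants
  set C := q^2/4 * IC with hCdef
  have hC : 0 < C := by
    have : q^2 > 0 := by positivity
    rw [hCdef]; positivity
  set c := C*A*m/2 with hcdef
  have hc : 0 < c := by rw [hcdef]; positivity
  -- the potential r
  set r : ℝ → ℝ := fun x => c - q/2 * deriv (deriv D) x + q^2/4 * (deriv D x)^2 / D x
    with hrdef
  have hrc : Continuous r := by
    apply Continuous.add
    · exact continuous_const.sub (continuous_const.mul hd2c)
    · exact (continuous_const.mul (hd1c.pow 2)).div hDc hDne
  have hrper : Function.Periodic r 1 := by
    intro x
    simp only [hrdef]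
    rw [hDper x, hd1per x, hd2per x]
  -- the integral of r
  have hrint : ∫ x in (0:ℝ)..1, r x = c + C := by
    have hsplit : ∫ x in (0:ℝ)..1, r x
        = (∫ x in (0:ℝ)..1, (c - q/2 * deriv (deriv D) x))
          + ∫ x in (0:ℝ)..1, q^2/4 * (deriv D x)^2 / D x := by
      apply intervalIntegral.integral_add
      · exact (continuous_const.sub (continuous_const.mul hd2c)).intervalIntegrable 0 1
      · exact ((continuous_const.mul (hd1c.pow 2)).div hDc hDne).intervalIntegrable 0 1
    rw [hsplit]
    have h1 : ∫ x in (0:ℝ)..1, (c - q/2 * deriv (deriv D) x) = c := by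
      rw [intervalIntegral.integral_sub (f := fun _ => c) (g := fun x => q/2 * deriv (deriv D) x)
        (continuous_const.intervalIntegrable 0 1)
        ((continuous_const.mul hd2c).intervalIntegrable 0 1)]
      have hd2zero : ∫ x in (0:ℝ)..1, deriv (deriv D) x = 0 := by
        have h0 := integral_deriv_periodic_zero (deriv D) (deriv (deriv D)) 0
          (fun x => (hd1d x).hasDerivAt) hd2c (by simpa using hd1per 0)
        rw [zero_add] at h0
        exact h0
      rw [intervalIntegral.integral_const_mul, hd2zero, mul_zero, sub_zero]
      simp
    have h2 : ∫ x in (0:ℝ)..1, q^2/4 * (deriv D x)^2 / D x = C := by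
      rw [hCdef, hICdef, ← intervalIntegral.integral_const_mul]
      congr 1
      funext x
      ring
    rw [h1, h2]
  refine ⟨r, hrc, hrper, ?_⟩
  intro k k₀ ψ φ hk hk₀
  -- lower bounds
  have hklow : ∀ lam, c + lam^2/A ≤ k lam := by
    intro lam
    have hkey := eigen_key D hD hDpos hDper r hrc q lam (k lam) (ψ lam) (hk lam)
    have hcs := cs_bound D (Gfun D (ψ lam) q lam) hDc hDpos
      (Gfun_continuous D (ψ lam) hD (hk lam).1 (hk lam).2.1 q lam) lam hkey.2
    rw [← hAdef] at hcs
    have := hkey.1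
    rw [hrint, ← hICdef, ← hCdef] at this
    linarith
  have hk₀low : ∀ lam, c + C + lam^2/A ≤ k₀ lam := by
    intro lam
    have hkey := eigen_key D hD hDpos hDper r hrc 0 lam (k₀ lam) (φ lam) (hk₀ lam)
    have hcs := cs_bound D (Gfun D (φ lam) 0 lam) hDc hDpos
      (Gfun_continuous D (φ lam) hD (hk₀ lam).1 (hk₀ lam).2.1 0 lam) lam hkey.2
    rw [← hAdef] at hcs
    have := hkey.1
    rw [hrint] at this
    norm_num at this
    linarith
  -- upper bound for the q-problem
  have hkup : ∀ lam, k lam ≤ c + lam^2/(A^2*m) := by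
    intro lam
    have := eigen_upper D hD hDpos hDper q c r hrc (fun x => rfl) m hm hmD lam (k lam)
      (ψ lam) (hk lam)
    rw [← hAdef] at this
    exact this
  -- conclusion 1
  have hconc1 : k 0 < k₀ 0 := by
    have h1 := hkup 0
    have h2 := hk₀low 0
    norm_num at h1 h2
    linarith
  refine ⟨hconc1, ?_, ?_⟩
  · -- 0 < speed k
    set s := Real.sqrt (c/A) with hsdef
    have hspos : 0 < s := Real.sqrt_pos.mpr (by positivity)
    have hssq : s^2 = c/A := Real.sq_sqrt (by positivity)
    have hbound : ∀ l : ℝ, 0 < l → 2*s ≤ k l / l := by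
      intro l hl
      have h := hklow l
      rw [le_div_iff₀ hl]
      have hcA : c = s^2 * A := by rw [hssq]; field_simp
      have e : (s*A - l)^2 / A = c - 2*s*l + l^2/A := by
        rw [hcA]
        field_simp
        ring
      have h3 : 0 ≤ (s*A - l)^2 / A := div_nonneg (sq_nonneg _) hA.le
      linarith [h, h3, e]
    have hle : ((2*s : ℝ) : EReal) ≤ speed k := by
      apply le_iInf
      intro l
      exact EReal.coe_le_coe_iff.mpr (hbound l.1 l.2)
    have h0 : (0 : EReal) < ((2*s : ℝ) : EReal) := by
      rw [← EReal.coe_zero, EReal.coe_lt_coe_iff]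
      positivity
    exact lt_of_lt_of_le h0 hle
  · -- speed k < speed k₀
    set s' := Real.sqrt ((c+C)/A) with hs'def
    have hs'pos : 0 < s' := Real.sqrt_pos.mpr (by positivity)
    have hs'sq : s'^2 = (c+C)/A := Real.sq_sqrt (by positivity)
    have hS₀le : ((2*s' : ℝ) : EReal) ≤ speed k₀ := by
      apply le_iInf
      intro l
      apply EReal.coe_le_coe_iff.mpr
      have h := hk₀low l.1
      have hl := l.2
      rw [le_div_iff₀ hl]
      have hcA : c + C = s'^2 * A := by rw [hs'sq]; field_simp
      have e : (s'*A - l.1)^2 / A = (c + C) - 2*s'*l.1 + l.1^2/A := by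
        rw [hcA]
        field_simp
        ring
      have h3 : 0 ≤ (s'*A - l.1)^2 / A := div_nonneg (sq_nonneg _) hA.le
      linarith [h, h3, e]
    set ls := Real.sqrt (c*A^2*m) with hlsdef
    have hlspos : 0 < ls := Real.sqrt_pos.mpr (by positivity)
    have hlssq : ls^2 = c*A^2*m := Real.sq_sqrt (by positivity)
    have hkls : k ls ≤ 2*c := by
      have h := hkup ls
      rw [hlssq] at h
      have he : c*A^2*m/(A^2*m) = c := by field_simp
      rw [he] at h
      linarith
    have hchain1 : speed k ≤ ((k ls / ls : ℝ) : EReal) := by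
      show (⨅ l : {l : ℝ // 0 < l}, ((k l.1 / l.1 : ℝ) : EReal)) ≤ _
      exact iInf_le _ (⟨ls, hlspos⟩ : {l : ℝ // 0 < l})
    have hchain2 : ((k ls / ls : ℝ) : EReal) ≤ ((2*c/ls : ℝ) : EReal) := by
      apply EReal.coe_le_coe_iff.mpr
      gcongr
    have hchain3 : ((2*c/ls : ℝ) : EReal) < ((2*s' : ℝ) : EReal) := by
      apply EReal.coe_lt_coe_iff.mpr
      rw [div_lt_iff₀ hlspos]
      have hkey2 : (2*c)^2 < (2*s'*ls)^2 := by
        have hAne : A ≠ 0 := ne_of_gt hA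
        have h1 : (2*s'*ls)^2 = 4 * ((c+C)*c*A*m) := by
          rw [mul_pow, mul_pow, hs'sq, hlssq]
          field_simp
          ring
        have h3 : C*A*m = 2*c := by rw [hcdef]; ring
        rw [h1]
        nlinarith [mul_pos (mul_pos (mul_pos hc hc) hA) hm, hc, h3]
      have hpos1 : (0:ℝ) ≤ 2*c := by linarith
      have hpos2 : (0:ℝ) ≤ 2*s'*ls := by positivity
      exact (pow_lt_pow_iff_left₀ hpos1 hpos2 two_ne_zero).mp hkey2
    calc speed k ≤ ((k ls / ls : ℝ) : EReal) := hchain1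
      _ ≤ ((2*c/ls : ℝ) : EReal) := hchain2
      _ < ((2*s' : ℝ) : EReal) := hchain3
      _ ≤ speed k₀ := hS₀le
end
end

section
/- Let r : ℝ → ℝ be a continuous 1-periodic function that is not constant, and let q ∈ ℝ with q ≠ 0. Then there exists a positive, 1-periodic, C² function D : ℝ → ℝ such that whenever (k_q, ψ) is a principal eigenpair of L_q^0[r;D] and (k₀, φ) is a principal eigenpair of L_0^0[r;D], one has k_q < k₀. -/
open Real MeasureTheory Set Filter Topology

noncomputable section

namespace Stmt2

def rbar (r : ℝ → ℝ) : ℝ := ∫ x in (0:ℝ)..1, r x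

def RR (r : ℝ → ℝ) : ℝ → ℝ := fun x => ∫ t in (0:ℝ)..x, (rbar r - r t)

def cc (r : ℝ → ℝ) : ℝ := ∫ t in (0:ℝ)..1, RR r t

def AA (r : ℝ → ℝ) : ℝ → ℝ := fun x => ∫ t in (0:ℝ)..x, (RR r t - cc r)

variable {r : ℝ → ℝ} {q M : ℝ}

theorem hasDerivAt_RR (hr : Continuous r) (x : ℝ) :
    HasDerivAt (RR r) (rbar r - r x) x :=
  ((continuous_const.sub hr).integral_hasStrictDerivAt 0 x).hasDerivAt

theorem continuous_RR (hr : Continuous r) : Continuous (RR r) :=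
  Differentiable.continuous (fun x => (hasDerivAt_RR hr x).differentiableAt)

theorem periodic_RR (hr : Continuous r) (hp : Function.Periodic r 1) :
    Function.Periodic (RR r) 1 := by
  intro x
  have hper : Function.Periodic (fun t => rbar r - r t) 1 := fun t => by simp [hp t]
  have hint : ∀ a b : ℝ, IntervalIntegrable (fun t => rbar r - r t) volume a b :=
    fun a b => (continuous_const.sub hr).intervalIntegrable a b
  have h1 : (∫ t in (0:ℝ)..(x+1), (rbar r - r t))
      = (∫ t in (0:ℝ)..x, (rbar r - r t)) + ∫ t in x..(x+1), (rbar r - r t) :=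
    (intervalIntegral.integral_add_adjacent_intervals (hint 0 x) (hint x (x+1))).symm
  have h2 : (∫ t in x..(x+1), (rbar r - r t)) = ∫ t in (0:ℝ)..(0+1), (rbar r - r t) :=
    hper.intervalIntegral_add_eq x 0
  have h3 : (∫ t in (0:ℝ)..(0+1), (rbar r - r t)) = 0 := by
    rw [zero_add, intervalIntegral.integral_sub (intervalIntegrable_const) (hr.intervalIntegrable 0 1)]
    simp [rbar]
  show RR r (x + 1) = RR r x
  unfold RR
  rw [h1, h2, h3, add_zero]

theorem hasDerivAt_AA (hr : Continuous r) (x : ℝ) :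
    HasDerivAt (AA r) (RR r x - cc r) x :=
  (((continuous_RR hr).sub continuous_const).integral_hasStrictDerivAt 0 x).hasDerivAt

theorem continuous_AA (hr : Continuous r) : Continuous (AA r) :=
  Differentiable.continuous (fun x => (hasDerivAt_AA hr x).differentiableAt)

theorem periodic_AA (hr : Continuous r) (hp : Function.Periodic r 1) :
    Function.Periodic (AA r) 1 := by
  intro x
  have hper : Function.Periodic (fun t => RR r t - cc r) 1 := fun t => by
    simp [periodic_RR hr hp t]
  have hint : ∀ a b : ℝ, IntervalIntegrable (fun t => RR r t - cc r) volume a b :=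
    fun a b => ((continuous_RR hr).sub continuous_const).intervalIntegrable a b
  have h1 : (∫ t in (0:ℝ)..(x+1), (RR r t - cc r))
      = (∫ t in (0:ℝ)..x, (RR r t - cc r)) + ∫ t in x..(x+1), (RR r t - cc r) :=
    (intervalIntegral.integral_add_adjacent_intervals (hint 0 x) (hint x (x+1))).symm
  have h2 : (∫ t in x..(x+1), (RR r t - cc r)) = ∫ t in (0:ℝ)..(0+1), (RR r t - cc r) :=
    hper.intervalIntegral_add_eq x 0
  have h3 : (∫ t in (0:ℝ)..(0+1), (RR r t - cc r)) = 0 := by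
    rw [zero_add, intervalIntegral.integral_sub ((continuous_RR hr).intervalIntegrable 0 1)
      (intervalIntegrable_const)]
    simp [cc]
  show AA r (x + 1) = AA r x
  unfold AA
  rw [h1, h2, h3, add_zero]

theorem exists_bound (hr : Continuous r) (hp : Function.Periodic r 1) :
    ∃ M : ℝ, ∀ x, |AA r x| ≤ M := by
  obtain ⟨M, hM⟩ := (isCompact_Icc (a := (0:ℝ)) (b := 1)).exists_bound_of_continuousOn
    (continuous_AA hr).continuousOn
  refine ⟨M, fun x => ?_⟩
  have hfr : AA r (Int.fract x) = AA r x := by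
    have h2 := (periodic_AA hr hp).sub_int_mul_eq (x := x) ⌊x⌋
    rw [mul_one] at h2
    rw [Int.self_sub_floor] at h2
    exact h2
  rw [← hfr]
  simpa using hM (Int.fract x) ⟨Int.fract_nonneg x, (Int.fract_lt_one x).le⟩

theorem periodic_deriv {f : ℝ → ℝ} (h : Function.Periodic f 1) :
    Function.Periodic (deriv f) 1 := by
  intro x
  have hfe : (fun y => f (y + 1)) = f := funext h
  calc deriv f (x + 1) = deriv (fun y => f (y + 1)) x := (deriv_comp_add_const f 1 x).symm
    _ = deriv f x := by rw [hfe]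


def DD (r : ℝ → ℝ) (q M : ℝ) : ℝ → ℝ := fun x => (1 + |2/q| * M) + (2/q) * AA r x

def D1 (r : ℝ → ℝ) (q : ℝ) : ℝ → ℝ := fun x => (2/q) * (RR r x - cc r)

def D2 (r : ℝ → ℝ) (q : ℝ) : ℝ → ℝ := fun x => (2/q) * (rbar r - r x)

def mm (r : ℝ → ℝ) (q M : ℝ) : ℝ → ℝ := fun x => DD r q M x ^ (q/2 : ℝ)

def m1 (r : ℝ → ℝ) (q M : ℝ) : ℝ → ℝ :=
  fun x => D1 r q x * (q/2) * DD r q M x ^ (q/2 - 1 : ℝ)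

def m2 (r : ℝ → ℝ) (q M : ℝ) : ℝ → ℝ :=
  fun x => D2 r q x * (q/2) * DD r q M x ^ (q/2 - 1 : ℝ)
    + (D1 r q x * (q/2)) * (D1 r q x * (q/2 - 1) * DD r q M x ^ (q/2 - 1 - 1 : ℝ))

theorem DD_pos (hM : ∀ x, |AA r x| ≤ M) (x : ℝ) : 0 < DD r q M x := by
  have h1 : |(2/q) * AA r x| ≤ |2/q| * M := by
    rw [abs_mul]
    exact mul_le_mul_of_nonneg_left (hM x) (abs_nonneg _)
  have h2 := neg_abs_le ((2/q) * AA r x)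
  unfold DD
  nlinarith [abs_nonneg (AA r x)]

theorem hasDerivAt_DD (hr : Continuous r) (x : ℝ) :
    HasDerivAt (DD r q M) (D1 r q x) x :=
  ((hasDerivAt_AA hr x).const_mul (2/q)).const_add _

theorem hasDerivAt_D1 (hr : Continuous r) (x : ℝ) :
    HasDerivAt (D1 r q) (D2 r q x) x :=
  ((hasDerivAt_RR hr x).sub_const _).const_mul _

theorem deriv_DD (hr : Continuous r) : deriv (DD r q M) = D1 r q :=
  funext fun x => (hasDerivAt_DD hr x).deriv

theorem deriv2_DD (hr : Continuous r) : deriv (deriv (DD r q M)) = D2 r q := by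
  rw [deriv_DD hr]
  exact funext fun x => (hasDerivAt_D1 hr x).deriv

theorem continuous_DD (hr : Continuous r) : Continuous (DD r q M) :=
  continuous_const.add (continuous_const.mul (continuous_AA hr))

theorem continuous_D1 (hr : Continuous r) : Continuous (D1 r q) :=
  continuous_const.mul ((continuous_RR hr).sub continuous_const)

theorem continuous_D2 (hr : Continuous r) : Continuous (D2 r q) :=
  continuous_const.mul (continuous_const.sub hr)

theorem periodic_DD (hr : Continuous r) (hp : Function.Periodic r 1) :
    Function.Periodic (DD r q M) 1 := fun x => by
  unfold DD; rw [periodic_AA hr hp x]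

theorem periodic_D1 (hr : Continuous r) (hp : Function.Periodic r 1) :
    Function.Periodic (D1 r q) 1 := fun x => by
  unfold D1; rw [periodic_RR hr hp x]

theorem periodic_mm (hr : Continuous r) (hp : Function.Periodic r 1) :
    Function.Periodic (mm r q M) 1 := fun x => by
  unfold mm; rw [periodic_DD hr hp x]

theorem periodic_m1 (hr : Continuous r) (hp : Function.Periodic r 1) :
    Function.Periodic (m1 r q M) 1 := fun x => by
  unfold m1; rw [periodic_DD hr hp x, periodic_D1 hr hp x]

theorem contDiff_DD (hr : Continuous r) : ContDiff ℝ 2 (DD r q M) := by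
  have hAA : ContDiff ℝ 2 (AA r) := by
    have h2 : (2 : WithTop ℕ∞) = 1 + 1 := by norm_num
    rw [h2, contDiff_succ_iff_deriv]
    have hd : deriv (AA r) = fun x => RR r x - cc r :=
      funext fun x => (hasDerivAt_AA hr x).deriv
    refine ⟨fun x => (hasDerivAt_AA hr x).differentiableAt, by simp, ?_⟩
    rw [hd, contDiff_one_iff_deriv]
    have hd2 : deriv (fun x => RR r x - cc r) = fun x => rbar r - r x :=
      funext fun x => ((hasDerivAt_RR hr x).sub_const _).deriv
    exact ⟨fun x => ((hasDerivAt_RR hr x).sub_const _).differentiableAt,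
      hd2 ▸ (continuous_const.sub hr)⟩
  exact contDiff_const.add (contDiff_const.mul hAA)

theorem mm_pos (hM : ∀ x, |AA r x| ≤ M) (x : ℝ) : 0 < mm r q M x :=
  Real.rpow_pos_of_pos (DD_pos hM x) _

theorem hasDerivAt_mm (hr : Continuous r) (hM : ∀ x, |AA r x| ≤ M) (x : ℝ) :
    HasDerivAt (mm r q M) (m1 r q M x) x :=
  (hasDerivAt_DD hr x).rpow_const (Or.inl (DD_pos hM x).ne')

theorem hasDerivAt_m1 (hr : Continuous r) (hM : ∀ x, |AA r x| ≤ M) (x : ℝ) :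
    HasDerivAt (m1 r q M) (m2 r q M x) x :=
  ((hasDerivAt_D1 hr x).mul_const (q/2)).mul
    ((hasDerivAt_DD hr x).rpow_const (Or.inl (DD_pos hM x).ne'))

theorem continuous_mm (hr : Continuous r) (hM : ∀ x, |AA r x| ≤ M) :
    Continuous (mm r q M) :=
  (continuous_DD hr).rpow_const (fun x => Or.inl (DD_pos hM x).ne')

theorem continuous_m1 (hr : Continuous r) (hM : ∀ x, |AA r x| ≤ M) :
    Continuous (m1 r q M) :=
  ((continuous_D1 hr).mul continuous_const).mul
    ((continuous_DD hr).rpow_const (fun x => Or.inl (DD_pos hM x).ne'))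

theorem continuous_m2 (hr : Continuous r) (hM : ∀ x, |AA r x| ≤ M) :
    Continuous (m2 r q M) := by
  have h1 : Continuous (fun x => DD r q M x ^ (q/2 - 1 : ℝ)) :=
    (continuous_DD hr).rpow_const (fun x => Or.inl (DD_pos hM x).ne')
  have h2 : Continuous (fun x => DD r q M x ^ (q/2 - 1 - 1 : ℝ)) :=
    (continuous_DD hr).rpow_const (fun x => Or.inl (DD_pos hM x).ne')
  exact (((continuous_D2 hr).mul continuous_const).mul h1).add
    (((continuous_D1 hr).mul continuous_const).mul
      (((continuous_D1 hr).mul continuous_const).mul h2))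


theorem key_identity (hq : q ≠ 0) (hM : ∀ x, |AA r x| ≤ M) (x : ℝ) :
    DD r q M x * m2 r q M x + (1 - q) * D1 r q x * m1 r q M x + r x * mm r q M x
      = rbar r * mm r q M x - (q/2)^2 * (DD r q M x ^ (q/2 - 1 : ℝ) * (D1 r q x)^2) := by
  have hpos := DD_pos (q := q) hM x
  have hne : DD r q M x ≠ 0 := hpos.ne'
  have e1 : DD r q M x ^ (q/2 : ℝ) = DD r q M x ^ (q/2 - 1 : ℝ) * DD r q M x := by
    rw [← Real.rpow_add_one hne (q/2 - 1)]
    norm_num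
  have e2 : DD r q M x ^ (q/2 - 1 : ℝ) = DD r q M x ^ (q/2 - 1 - 1 : ℝ) * DD r q M x := by
    rw [← Real.rpow_add_one hne (q/2 - 1 - 1)]
    norm_num
  unfold mm m1 m2 D2
  rw [e1, e2]
  field_simp
  ring

theorem exists_D1_ne (hr : Continuous r) (hp : Function.Periodic r 1)
    (hrnc : ¬ ∃ c, ∀ x, r x = c) (hq : q ≠ 0) :
    ∃ c ∈ Icc (0:ℝ) 1, D1 r q c ≠ 0 := by
  by_contra hcon
  push_neg at hcon
  -- RR = cc on Icc 0 1
  have hRRcc : ∀ x ∈ Icc (0:ℝ) 1, RR r x = cc r := by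
    intro x hx
    have := hcon x hx
    unfold D1 at this
    have h2q : (2/q : ℝ) ≠ 0 := by positivity
    have := mul_eq_zero.mp this
    rcases this with h | h
    · exact absurd h h2q
    · linarith [sub_eq_zero.mp h]
  -- hence r = rbar on Ioo 0 1
  have hIoo : ∀ x ∈ Ioo (0:ℝ) 1, r x = rbar r := by
    intro x hx
    have hmem : Ioo (0:ℝ) 1 ∈ 𝓝 x := isOpen_Ioo.mem_nhds hx
    have hconst : HasDerivAt (RR r) 0 x := by
      have : RR r =ᶠ[𝓝 x] (fun _ => cc r) := by
        filter_upwards [hmem] with y hy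
        exact hRRcc y (Ioo_subset_Icc_self hy)
      exact (hasDerivAt_const x (cc r)).congr_of_eventuallyEq this
    have := (hasDerivAt_RR hr x).unique hconst
    linarith
  -- closure: r = rbar on Icc 0 1
  have hIcc : ∀ x ∈ Icc (0:ℝ) 1, r x = rbar r := by
    have hcl : closure (Ioo (0:ℝ) 1) = Icc 0 1 := closure_Ioo one_ne_zero.symm
    intro x hx
    rw [← hcl] at hx
    have hclosed : IsClosed {y : ℝ | r y = rbar r} :=
      isClosed_eq hr continuous_const
    exact hclosed.closure_subset ((closure_mono (fun y hy => hIoo y hy : Ioo (0:ℝ) 1 ⊆ {y | r y = rbar r})) hx)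
  -- everywhere
  refine hrnc ⟨rbar r, fun x => ?_⟩
  have hfr : r (Int.fract x) = r x := by
    have h2 := hp.sub_int_mul_eq (x := x) ⌊x⌋
    rw [mul_one] at h2
    rw [Int.self_sub_floor] at h2
    exact h2
  rw [← hfr]
  exact hIcc _ ⟨Int.fract_nonneg x, (Int.fract_lt_one x).le⟩




theorem psi_derivs {ψ : ℝ → ℝ} (hψ2 : ContDiff ℝ 2 ψ) :
    Differentiable ℝ ψ ∧ Differentiable ℝ (deriv ψ) ∧ Continuous (deriv ψ)
      ∧ Continuous (deriv (deriv ψ)) := by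
  have h21 : (2 : WithTop ℕ∞) = 1 + 1 := by norm_num
  have h1 : ContDiff ℝ 1 (deriv ψ) := ((contDiff_succ_iff_deriv).mp (h21 ▸ hψ2)).2.2
  have h2 := contDiff_one_iff_deriv.mp h1
  exact ⟨hψ2.differentiable (by norm_num), h2.1, h2.1.continuous, h2.2⟩

theorem step_k0 (hr : Continuous r) (hp : Function.Periodic r 1)
    (hM : ∀ x, |AA r x| ≤ M) {k₀ : ℝ} {φ : ℝ → ℝ}
    (h : IsEigenpair 0 0 r (DD r q M) k₀ φ) : rbar r ≤ k₀ := by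
  obtain ⟨hφ2, hφpos, hφper, hφeq⟩ := h
  obtain ⟨hφdiff, hφ'diff, hφ'cont, hφ''cont⟩ := psi_derivs hφ2
  have heq : ∀ x, DD r q M x * deriv (deriv φ) x + D1 r q x * deriv φ x + r x * φ x
      = k₀ * φ x := by
    intro x
    have h := hφeq x
    rw [Lop, deriv2_DD hr, deriv_DD hr] at h
    linear_combination h
  set V : ℝ → ℝ := fun x => DD r q M x * deriv φ x / φ x with hV
  have hVd : ∀ x, HasDerivAt V ((k₀ - r x) - DD r q M x * (deriv φ x)^2 / (φ x)^2) x := by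
    intro x
    have hD := hasDerivAt_DD (q := q) (M := M) hr x
    have hφx : HasDerivAt φ (deriv φ x) x := (hφdiff x).hasDerivAt
    have hφ'x : HasDerivAt (deriv φ) (deriv (deriv φ) x) x := (hφ'diff x).hasDerivAt
    have hne : φ x ≠ 0 := (hφpos x).ne'
    have h0 : HasDerivAt (fun y => DD r q M y * deriv φ y / φ y)
        (((D1 r q x * deriv φ x + DD r q M x * deriv (deriv φ) x) * φ x
          - DD r q M x * deriv φ x * deriv φ x) / (φ x)^2) x := (hD.mul hφ'x).div hφx hne
    have hkey := heq x
    convert h0 using 1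
    field_simp
    linear_combination (-(φ x)) * hkey
  have hcont2 : Continuous (fun x => DD r q M x * (deriv φ x)^2 / (φ x)^2) :=
    ((continuous_DD hr).mul (hφ'cont.pow 2)).div ((hφ2.continuous).pow 2)
      (fun x => by have := hφpos x; positivity)
  have hFTC : (∫ x in (0:ℝ)..1, ((k₀ - r x) - DD r q M x * (deriv φ x)^2 / (φ x)^2))
      = V 1 - V 0 :=
    intervalIntegral.integral_eq_sub_of_hasDerivAt (fun x _ => hVd x)
      (((continuous_const.sub hr).sub hcont2).intervalIntegrable 0 1)
  have hVper : V 1 - V 0 = 0 := by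
    have h1 : V (0 + 1) = V 0 := by
      simp only [hV]
      rw [periodic_DD hr hp 0, periodic_deriv hφper 0, hφper 0]
    rw [zero_add] at h1
    rw [h1, sub_self]
  rw [hVper, intervalIntegral.integral_sub (f := fun x => k₀ - r x)
    (g := fun x => DD r q M x * (deriv φ x)^2 / (φ x)^2)
    ((continuous_const.sub hr : Continuous fun x => k₀ - r x).intervalIntegrable 0 1)
    (hcont2.intervalIntegrable 0 1)] at hFTC
  have hA : (∫ x in (0:ℝ)..1, (k₀ - r x)) = k₀ - rbar r := by
    rw [intervalIntegral.integral_sub intervalIntegrable_const (hr.intervalIntegrable 0 1)]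
    simp [rbar]
  have hB : 0 ≤ ∫ x in (0:ℝ)..1, DD r q M x * (deriv φ x)^2 / (φ x)^2 :=
    intervalIntegral.integral_nonneg (by norm_num)
      (fun u _ => div_nonneg (mul_nonneg (DD_pos hM u).le (sq_nonneg _)) (sq_nonneg _))
  rw [hA] at hFTC
  linarith


theorem step_kq (hr : Continuous r) (hp : Function.Periodic r 1)
    (hrnc : ¬ ∃ c, ∀ x, r x = c) (hq : q ≠ 0)
    (hM : ∀ x, |AA r x| ≤ M) {kq : ℝ} {ψ : ℝ → ℝ}
    (h : IsEigenpair q 0 r (DD r q M) kq ψ) : kq < rbar r := by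
  obtain ⟨hψ2, hψpos, hψper, hψeq⟩ := h
  obtain ⟨hψdiff, hψ'diff, hψ'cont, hψ''cont⟩ := psi_derivs hψ2
  have heq : ∀ x, DD r q M x * deriv (deriv ψ) x + (1 + q) * D1 r q x * deriv ψ x
      + (q * D2 r q x + r x) * ψ x = kq * ψ x := by
    intro x
    have h := hψeq x
    rw [Lop, deriv2_DD hr, deriv_DD hr] at h
    linear_combination h
  set W : ℝ → ℝ := fun x => DD r q M x * (mm r q M x * deriv ψ x - m1 r q M x * ψ x)
    + (q * D1 r q x) * (mm r q M x * ψ x) with hW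
  have hWd : ∀ x, HasDerivAt W
      (mm r q M x * (kq * ψ x)
        - ψ x * (DD r q M x * m2 r q M x + (1 - q) * D1 r q x * m1 r q M x
            + r x * mm r q M x)) x := by
    intro x
    have hD := hasDerivAt_DD (q := q) (M := M) hr x
    have hD1 := hasDerivAt_D1 (q := q) hr x
    have hm := hasDerivAt_mm (q := q) hr hM x
    have hm1 := hasDerivAt_m1 (q := q) hr hM x
    have hψx : HasDerivAt ψ (deriv ψ x) x := (hψdiff x).hasDerivAt
    have hψ'x : HasDerivAt (deriv ψ) (deriv (deriv ψ) x) x := (hψ'diff x).hasDerivAt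
    have hG : HasDerivAt (fun y => mm r q M y * deriv ψ y - m1 r q M y * ψ y)
        ((m1 r q M x * deriv ψ x + mm r q M x * deriv (deriv ψ) x)
          - (m2 r q M x * ψ x + m1 r q M x * deriv ψ x)) x :=
      (hm.mul hψ'x).sub (hm1.mul hψx)
    have hmψ : HasDerivAt (fun y => mm r q M y * ψ y)
        (m1 r q M x * ψ x + mm r q M x * deriv ψ x) x := hm.mul hψx
    have h0 := (hD.mul hG).add ((hD1.const_mul q).mul hmψ)
    refine h0.congr_deriv ?_
    rw [← heq x]
    ring
  have hcontSide : Continuous (fun x => ψ x * (DD r q M x * m2 r q M x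
      + (1 - q) * D1 r q x * m1 r q M x + r x * mm r q M x)) := by
    exact (hψ2.continuous).mul ((((continuous_DD hr).mul (continuous_m2 hr hM)).add
      ((continuous_const.mul (continuous_D1 hr)).mul (continuous_m1 hr hM))).add
      (hr.mul (continuous_mm hr hM)))
  have hcontF : Continuous (fun x => mm r q M x * (kq * ψ x)
      - ψ x * (DD r q M x * m2 r q M x + (1 - q) * D1 r q x * m1 r q M x
          + r x * mm r q M x)) :=
    ((continuous_mm hr hM).mul (continuous_const.mul hψ2.continuous)).sub hcontSide
  have hFTC : (∫ x in (0:ℝ)..1, (mm r q M x * (kq * ψ x)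
      - ψ x * (DD r q M x * m2 r q M x + (1 - q) * D1 r q x * m1 r q M x
          + r x * mm r q M x))) = W 1 - W 0 :=
    intervalIntegral.integral_eq_sub_of_hasDerivAt (fun x _ => hWd x)
      (hcontF.intervalIntegrable 0 1)
  have hWper : W 1 - W 0 = 0 := by
    have h1 : W (0 + 1) = W 0 := by
      simp only [hW]
      rw [periodic_DD hr hp 0, periodic_D1 hr hp 0, periodic_mm hr hp 0,
        periodic_m1 hr hp 0, periodic_deriv hψper 0, hψper 0]
    rw [zero_add] at h1
    rw [h1, sub_self]
  rw [hWper] at hFTC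
  have hcongr : ∀ x, mm r q M x * (kq * ψ x)
      - ψ x * (DD r q M x * m2 r q M x + (1 - q) * D1 r q x * m1 r q M x
          + r x * mm r q M x)
      = (kq - rbar r) * (mm r q M x * ψ x)
        + (q/2)^2 * (DD r q M x ^ (q/2 - 1 : ℝ) * (D1 r q x)^2 * ψ x) := by
    intro x
    rw [key_identity hq hM x]
    ring
  rw [intervalIntegral.integral_congr (g := fun x => (kq - rbar r) * (mm r q M x * ψ x)
    + (q/2)^2 * (DD r q M x ^ (q/2 - 1 : ℝ) * (D1 r q x)^2 * ψ x))
    (fun x _ => hcongr x)] at hFTC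
  have hcontmψ : Continuous (fun x => mm r q M x * ψ x) :=
    (continuous_mm hr hM).mul hψ2.continuous
  have hcontI2 : Continuous (fun x => DD r q M x ^ (q/2 - 1 : ℝ) * (D1 r q x)^2 * ψ x) :=
    (((continuous_DD hr).rpow_const (fun x => Or.inl (DD_pos hM x).ne')).mul
      ((continuous_D1 hr).pow 2)).mul hψ2.continuous
  rw [intervalIntegral.integral_add (f := fun x => (kq - rbar r) * (mm r q M x * ψ x))
    (g := fun x => (q/2)^2 * (DD r q M x ^ (q/2 - 1 : ℝ) * (D1 r q x)^2 * ψ x))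
    ((continuous_const.mul hcontmψ :
      Continuous fun x => (kq - rbar r) * (mm r q M x * ψ x)).intervalIntegrable 0 1)
    ((continuous_const.mul hcontI2 : Continuous fun x =>
      (q/2)^2 * (DD r q M x ^ (q/2 - 1 : ℝ) * (D1 r q x)^2 * ψ x)).intervalIntegrable 0 1),
    intervalIntegral.integral_const_mul, intervalIntegral.integral_const_mul] at hFTC
  have hI1 : 0 < ∫ x in (0:ℝ)..1, mm r q M x * ψ x :=
    intervalIntegral.intervalIntegral_pos_of_pos (hcontmψ.intervalIntegrable 0 1)
      (fun x => mul_pos (mm_pos hM x) (hψpos x)) one_pos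
  have hI2 : 0 < ∫ x in (0:ℝ)..1, DD r q M x ^ (q/2 - 1 : ℝ) * (D1 r q x)^2 * ψ x := by
    obtain ⟨c, hc, hcne⟩ := exists_D1_ne hr hp hrnc hq
    refine intervalIntegral.integral_pos one_pos hcontI2.continuousOn
      (fun x _ => mul_nonneg (mul_nonneg (Real.rpow_pos_of_pos (DD_pos hM x) _).le
        (sq_nonneg _)) (hψpos x).le) ⟨c, hc, ?_⟩
    exact mul_pos (mul_pos (Real.rpow_pos_of_pos (DD_pos hM c) _)
      ((sq_nonneg (D1 r q c)).lt_of_ne (Ne.symm (pow_ne_zero 2 hcne)))) (hψpos c)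
  have hβ : 0 < (q/2)^2 := by positivity
  nlinarith [hFTC, hI1, hI2, hβ]

end Stmt2

theorem stmt_2 (r : ℝ → ℝ) (hr : Continuous r) (hrper : Function.Periodic r 1)
    (hrnc : ¬ ∃ c, ∀ x, r x = c) (q : ℝ) (hq : q ≠ 0) :
    ∃ D : ℝ → ℝ, ContDiff ℝ 2 D ∧ (∀ x, 0 < D x) ∧ Function.Periodic D 1 ∧
      ∀ (kq k₀ : ℝ) (ψ φ : ℝ → ℝ),
        IsEigenpair q 0 r D kq ψ → IsEigenpair 0 0 r D k₀ φ → kq < k₀ := by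
  obtain ⟨M, hM⟩ := Stmt2.exists_bound hr hrper
  exact ⟨Stmt2.DD r q M, Stmt2.contDiff_DD hr, Stmt2.DD_pos hM, Stmt2.periodic_DD hr hrper,
    fun kq k₀ ψ φ hψ hφ => lt_of_lt_of_le (Stmt2.step_kq hr hrper hrnc hq hM hψ)
      (Stmt2.step_k0 hr hrper hM hφ)⟩
end
end

section
/- Let q, q̃ ∈ ℝ, let D be a positive, 1-periodic, C² function and r a continuous 1-periodic function. Suppose that for every λ ∈ ℝ we are given a principal eigenpair (k(λ), ψ_λ) of L_q^λ[r;D] and a principal eigenpair (k̃(λ), φ_λ) of L_{q̃}^λ[r;D], and assume k(0) > k̃(0) > 0. Then there exists κ₀ ∈ (0, k̃(0)) such that for every κ ∈ (κ₀, k̃(0)) one has inf_{λ>0} (k(λ) − κ)/λ > inf_{λ>0} (k̃(λ) − κ)/λ > 0. -/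
open Real MeasureTheory Set Filter Topology

set_option maxHeartbeats 2000000

noncomputable section

lemma cd2_diff {f : ℝ → ℝ} (h : ContDiff ℝ 2 f) : Differentiable ℝ f :=
  h.differentiable (by norm_num)

lemma cd2_deriv {f : ℝ → ℝ} (h : ContDiff ℝ 2 f) : ContDiff ℝ 1 (deriv f) := by
  have h2 : ContDiff ℝ ((1 : ℕ) + 1) f := by exact_mod_cast h
  rw [contDiff_succ_iff_deriv] at h2
  exact_mod_cast h2.2.2

lemma cd2_deriv_diff {f : ℝ → ℝ} (h : ContDiff ℝ 2 f) : Differentiable ℝ (deriv f) :=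
  (cd2_deriv h).differentiable (by norm_num)

lemma periodic_exists_max {f : ℝ → ℝ} (hf : Continuous f) (hp : Function.Periodic f 1) :
    ∃ x₀, ∀ x, f x ≤ f x₀ := by
  obtain ⟨x₀, _, hx₀⟩ := isCompact_Icc.exists_isMaxOn (⟨0, by norm_num⟩ :
    (Icc (0:ℝ) 1).Nonempty) hf.continuousOn
  refine ⟨x₀, fun x => ?_⟩
  obtain ⟨y, hy, hxy⟩ := hp.exists_mem_Ico₀ one_pos x
  rw [hxy]
  exact hx₀ (Ico_subset_Icc_self hy)

lemma periodic_exists_min {f : ℝ → ℝ} (hf : Continuous f) (hp : Function.Periodic f 1) :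
    ∃ x₀, ∀ x, f x₀ ≤ f x := by
  obtain ⟨x₀, hx₀⟩ := periodic_exists_max hf.neg (fun x => by simp [hp x])
  exact ⟨x₀, fun x => by have := hx₀ x; simpa using this⟩

lemma second_deriv_nonpos {h : ℝ → ℝ} (hd : Differentiable ℝ h)
    (hd2 : Differentiable ℝ (deriv h)) {x₀ : ℝ} (hmax : ∀ x, h x ≤ h x₀) :
    deriv (deriv h) x₀ ≤ 0 := by
  by_contra hc
  push_neg at hc
  have h1 : deriv h x₀ = 0 := by
    have : IsLocalMax h x₀ := Filter.Eventually.of_forall hmax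
    exact this.deriv_eq_zero
  have hder : HasDerivAt (deriv h) (deriv (deriv h) x₀) x₀ := (hd2 x₀).hasDerivAt
  rw [hasDerivAt_iff_tendsto_slope] at hder
  have hev : ∀ᶠ x in 𝓝[>] x₀, 0 < slope (deriv h) x₀ x := by
    have : ∀ᶠ x in 𝓝[≠] x₀, 0 < slope (deriv h) x₀ x :=
      hder.eventually (eventually_gt_nhds hc)
    exact this.filter_mono (nhdsWithin_mono _ (fun x hx => ne_of_gt hx))
  obtain ⟨u, hu, hIoo⟩ := mem_nhdsGT_iff_exists_Ioo_subset.mp hev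
  have hu' : x₀ < u := hu
  have hpos : ∀ x ∈ Ioo x₀ u, 0 < deriv h x := by
    intro x hx
    have hs := hIoo hx
    simp only [mem_setOf_eq, slope_def_field] at hs
    have h2 : 0 < (deriv h x - deriv h x₀) / (x - x₀) := by
      simpa [slope, h1] using hs
    have hxpos : 0 < x - x₀ := sub_pos.mpr hx.1
    nlinarith [mul_pos h2 hxpos, (div_mul_cancel₀ (deriv h x - deriv h x₀) hxpos.ne')]
  set b := (x₀ + u) / 2 with hb
  have hbx : x₀ < b := by simp [hb]; linarith
  have hbu : b < u := by simp [hb]; linarith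
  have hmono : StrictMonoOn h (Icc x₀ b) := by
    apply strictMonoOn_of_deriv_pos (convex_Icc _ _) hd.continuous.continuousOn
    intro x hx
    rw [interior_Icc] at hx
    exact hpos x ⟨hx.1, lt_trans hx.2 hbu⟩
  have := hmono (left_mem_Icc.mpr hbx.le) (right_mem_Icc.mpr hbx.le) hbx
  exact absurd (hmax b) (not_le.mpr this)

lemma second_deriv_nonneg {h : ℝ → ℝ} (hd : Differentiable ℝ h)
    (hd2 : Differentiable ℝ (deriv h)) {x₀ : ℝ} (hmin : ∀ x, h x₀ ≤ h x) :
    0 ≤ deriv (deriv h) x₀ := by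
  have hneg : deriv (deriv (fun x => -h x)) x₀ ≤ 0 := by
    apply second_deriv_nonpos hd.neg
    · have : (deriv fun x => -h x) = fun x => -(deriv h x) := by
        funext x; exact deriv.neg
      show Differentiable ℝ (deriv fun x => -h x); rw [this]; exact hd2.neg
    · intro x; simpa using hmin x
  have e1 : (deriv fun x => -h x) = fun x => -(deriv h x) := by
    funext x; exact deriv.neg
  rw [e1] at hneg
  have e2 : deriv (fun x => -(deriv h x)) x₀ = -(deriv (deriv h) x₀) := deriv.neg
  rw [e2] at hneg
  linarith

/-- If `(k, φ)` is an eigenpair and `ψ` is a positive periodic C² test function with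
`Lψ ≤ c ψ` everywhere, then `k ≤ c`. -/
lemma eig_le_of_test (q lam : ℝ) (r D : ℝ → ℝ) (hDpos : ∀ x, 0 < D x)
    {kv : ℝ} {φ : ℝ → ℝ} (hφ : IsEigenpair q lam r D kv φ)
    {ψ : ℝ → ℝ} (hψ2 : ContDiff ℝ 2 ψ) (hψpos : ∀ x, 0 < ψ x)
    (hψper : Function.Periodic ψ 1) {c : ℝ}
    (hc : ∀ x, Lop q lam r D ψ x ≤ c * ψ x) : kv ≤ c := by
  obtain ⟨hφ2, hφpos, hφper, hφeig⟩ := hφ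
  set h : ℝ → ℝ := fun x => φ x / ψ x with hdef
  have hψne : ∀ x, ψ x ≠ 0 := fun x => (hψpos x).ne'
  have hh2 : ContDiff ℝ 2 h := hφ2.div hψ2 hψne
  have hhper : Function.Periodic h 1 := fun x => by simp [hdef, hφper x, hψper x]
  obtain ⟨x₀, hx₀⟩ := periodic_exists_max (hh2.continuous) hhper
  have hφeq : φ = fun x => h x * ψ x := by
    funext x; simp [hdef, div_mul_cancel₀ _ (hψne x)]
  -- first derivative of φ
  have hd1 : deriv φ = fun x => deriv h x * ψ x + h x * deriv ψ x := by
    funext x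
    rw [hφeq]
    exact (((cd2_diff hh2 x).hasDerivAt).mul ((cd2_diff hψ2 x).hasDerivAt)).deriv
  -- second derivative at x₀
  have hlm : IsLocalMax h x₀ := Filter.Eventually.of_forall hx₀
  have hx₀d : deriv h x₀ = 0 := hlm.deriv_eq_zero
  have hx₀dd : deriv (deriv h) x₀ ≤ 0 :=
    second_deriv_nonpos (cd2_diff hh2) (cd2_deriv_diff hh2) hx₀
  have hd2 : deriv (deriv φ) x₀ =
      deriv (deriv h) x₀ * ψ x₀ + 2 * deriv h x₀ * deriv ψ x₀ + h x₀ * deriv (deriv ψ) x₀ := by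
    rw [hd1]
    have t1 : HasDerivAt (fun x => deriv h x * ψ x + h x * deriv ψ x)
        ((deriv (deriv h) x₀ * ψ x₀ + deriv h x₀ * deriv ψ x₀) +
         (deriv h x₀ * deriv ψ x₀ + h x₀ * deriv (deriv ψ) x₀)) x₀ :=
      ((cd2_deriv_diff hh2 x₀).hasDerivAt.mul (cd2_diff hψ2 x₀).hasDerivAt).add
        ((cd2_diff hh2 x₀).hasDerivAt.mul (cd2_deriv_diff hψ2 x₀).hasDerivAt)
    rw [t1.deriv]; ring
  have heig := hφeig x₀
  rw [Lop] at heig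
  rw [hd2, hd1] at heig
  simp only [hφeq] at heig
  rw [hx₀d] at heig
  have hLψ := hc x₀
  rw [Lop] at hLψ
  have hhpos : 0 < h x₀ := div_pos (hφpos x₀) (hψpos x₀)
  have heq : kv * (h x₀ * ψ x₀) = h x₀ * (D x₀ * deriv (deriv ψ) x₀ +
      ((1 + q) * deriv D x₀ - 2 * lam * D x₀) * deriv ψ x₀ +
      (q * deriv (deriv D) x₀ + lam ^ 2 * D x₀ - (1 + q) * lam * deriv D x₀ + r x₀) * ψ x₀) +
      D x₀ * deriv (deriv h) x₀ * ψ x₀ := by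
    linear_combination (-1 : ℝ) * heig
  have h1 : h x₀ * (D x₀ * deriv (deriv ψ) x₀ +
      ((1 + q) * deriv D x₀ - 2 * lam * D x₀) * deriv ψ x₀ +
      (q * deriv (deriv D) x₀ + lam ^ 2 * D x₀ - (1 + q) * lam * deriv D x₀ + r x₀) * ψ x₀)
      ≤ h x₀ * (c * ψ x₀) := mul_le_mul_of_nonneg_left hLψ hhpos.le
  have h2 : D x₀ * deriv (deriv h) x₀ * ψ x₀ ≤ 0 :=
    mul_nonpos_of_nonpos_of_nonneg
      (mul_nonpos_of_nonneg_of_nonpos (hDpos x₀).le hx₀dd) (hψpos x₀).le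
  have hpos2 : 0 < h x₀ * ψ x₀ := mul_pos hhpos (hψpos x₀)
  have hfin : kv * (h x₀ * ψ x₀) ≤ c * (h x₀ * ψ x₀) := by
    calc kv * (h x₀ * ψ x₀) = _ := heq
    _ ≤ h x₀ * (c * ψ x₀) + 0 := add_le_add h1 h2
    _ = c * (h x₀ * ψ x₀) := by ring
  exact le_of_mul_le_mul_right hfin hpos2

/-- If `(k, φ)` is an eigenpair and `ψ` is a positive periodic C² test function with
`Lψ ≥ c ψ` everywhere, then `k ≥ c`. -/
lemma eig_ge_of_test (q lam : ℝ) (r D : ℝ → ℝ) (hDpos : ∀ x, 0 < D x)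
    {kv : ℝ} {φ : ℝ → ℝ} (hφ : IsEigenpair q lam r D kv φ)
    {ψ : ℝ → ℝ} (hψ2 : ContDiff ℝ 2 ψ) (hψpos : ∀ x, 0 < ψ x)
    (hψper : Function.Periodic ψ 1) {c : ℝ}
    (hc : ∀ x, c * ψ x ≤ Lop q lam r D ψ x) : c ≤ kv := by
  obtain ⟨hφ2, hφpos, hφper, hφeig⟩ := hφ
  set h : ℝ → ℝ := fun x => φ x / ψ x with hdef
  have hψne : ∀ x, ψ x ≠ 0 := fun x => (hψpos x).ne'
  have hh2 : ContDiff ℝ 2 h := hφ2.div hψ2 hψne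
  have hhper : Function.Periodic h 1 := fun x => by simp [hdef, hφper x, hψper x]
  obtain ⟨x₀, hx₀⟩ := periodic_exists_min (hh2.continuous) hhper
  have hφeq : φ = fun x => h x * ψ x := by
    funext x; simp [hdef, div_mul_cancel₀ _ (hψne x)]
  have hd1 : deriv φ = fun x => deriv h x * ψ x + h x * deriv ψ x := by
    funext x
    rw [hφeq]
    exact (((cd2_diff hh2 x).hasDerivAt).mul ((cd2_diff hψ2 x).hasDerivAt)).deriv
  have hlm : IsLocalMin h x₀ := Filter.Eventually.of_forall hx₀
  have hx₀d : deriv h x₀ = 0 := hlm.deriv_eq_zero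
  have hx₀dd : 0 ≤ deriv (deriv h) x₀ :=
    second_deriv_nonneg (cd2_diff hh2) (cd2_deriv_diff hh2) hx₀
  have hd2 : deriv (deriv φ) x₀ =
      deriv (deriv h) x₀ * ψ x₀ + 2 * deriv h x₀ * deriv ψ x₀ + h x₀ * deriv (deriv ψ) x₀ := by
    rw [hd1]
    have t1 : HasDerivAt (fun x => deriv h x * ψ x + h x * deriv ψ x)
        ((deriv (deriv h) x₀ * ψ x₀ + deriv h x₀ * deriv ψ x₀) +
         (deriv h x₀ * deriv ψ x₀ + h x₀ * deriv (deriv ψ) x₀)) x₀ :=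
      ((cd2_deriv_diff hh2 x₀).hasDerivAt.mul (cd2_diff hψ2 x₀).hasDerivAt).add
        ((cd2_diff hh2 x₀).hasDerivAt.mul (cd2_deriv_diff hψ2 x₀).hasDerivAt)
    rw [t1.deriv]; ring
  have heig := hφeig x₀
  rw [Lop] at heig
  rw [hd2, hd1] at heig
  simp only [hφeq] at heig
  rw [hx₀d] at heig
  have hLψ := hc x₀
  rw [Lop] at hLψ
  have hhpos : 0 < h x₀ := div_pos (hφpos x₀) (hψpos x₀)
  have heq : kv * (h x₀ * ψ x₀) = h x₀ * (D x₀ * deriv (deriv ψ) x₀ +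
      ((1 + q) * deriv D x₀ - 2 * lam * D x₀) * deriv ψ x₀ +
      (q * deriv (deriv D) x₀ + lam ^ 2 * D x₀ - (1 + q) * lam * deriv D x₀ + r x₀) * ψ x₀) +
      D x₀ * deriv (deriv h) x₀ * ψ x₀ := by
    linear_combination (-1 : ℝ) * heig
  have h1 : h x₀ * (c * ψ x₀) ≤ h x₀ * (D x₀ * deriv (deriv ψ) x₀ +
      ((1 + q) * deriv D x₀ - 2 * lam * D x₀) * deriv ψ x₀ +
      (q * deriv (deriv D) x₀ + lam ^ 2 * D x₀ - (1 + q) * lam * deriv D x₀ + r x₀) * ψ x₀)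
       := mul_le_mul_of_nonneg_left hLψ hhpos.le
  have h2 : 0 ≤ D x₀ * deriv (deriv h) x₀ * ψ x₀ :=
    mul_nonneg (mul_nonneg (hDpos x₀).le hx₀dd) (hψpos x₀).le
  have hpos2 : 0 < h x₀ * ψ x₀ := mul_pos hhpos (hψpos x₀)
  have hfin : c * (h x₀ * ψ x₀) ≤ kv * (h x₀ * ψ x₀) := by
    calc c * (h x₀ * ψ x₀) = h x₀ * (c * ψ x₀) + 0 := by ring
    _ ≤ _ := add_le_add h1 h2
    _ = kv * (h x₀ * ψ x₀) := heq.symm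
  exact le_of_mul_le_mul_right hfin hpos2

lemma cd1_of_deriv {f g : ℝ → ℝ} (hf : Differentiable ℝ f) (hg : ContDiff ℝ 1 g)
    (hfg : deriv f = g) : ContDiff ℝ 2 f := by
  have h2 : ContDiff ℝ ((1 : ℕ) + 1) f := by
    rw [contDiff_succ_iff_deriv]
    refine ⟨hf, by simp, ?_⟩
    rw [hfg]; exact_mod_cast hg
  exact_mod_cast h2

/-- Key construction: two-sided quadratic bounds on the principal eigenvalue. -/
lemma key_bounds (q : ℝ) (D r : ℝ → ℝ) (hD : ContDiff ℝ 2 D) (hDpos : ∀ x, 0 < D x)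
    (hDper : Function.Periodic D 1)
    (k : ℝ → ℝ) (ψ : ℝ → ℝ → ℝ)
    (hk : ∀ lam : ℝ, IsEigenpair q lam r D (k lam) (ψ lam)) :
    ∃ m M : ℝ, 0 < m ∧ m ≤ M ∧ ∀ lam : ℝ,
      k 0 + m * lam ^ 2 ≤ k lam ∧ k lam ≤ k 0 + M * lam ^ 2 := by
  obtain ⟨hψ2, hψpos, hψper, hψeig⟩ := hk 0
  set ψ0 : ℝ → ℝ := ψ 0 with hψ0def
  have hψ0ne : ∀ x, ψ0 x ≠ 0 := fun x => (hψpos x).ne'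
  have hDne : ∀ x, D x ≠ 0 := fun x => (hDpos x).ne'
  -- the function G with G' = 2ψ0'/ψ0 + (1+q)D'/D
  set G : ℝ → ℝ := fun x => 2 * Real.log (ψ0 x) + (1 + q) * Real.log (D x) with hGdef
  have hG : ContDiff ℝ 2 G :=
    (contDiff_const.mul (hψ2.log hψ0ne)).add (contDiff_const.mul (hD.log hDne))
  have hGper : Function.Periodic G 1 := fun x => by simp [hGdef, hψper x, hDper x]
  have hGd : ∀ x, HasDerivAt G
      (2 * (deriv ψ0 x / ψ0 x) + (1 + q) * (deriv D x / D x)) x := by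
    intro x
    exact (((cd2_diff hψ2 x).hasDerivAt.log (hψ0ne x)).const_mul 2).add
      (((cd2_diff hD x).hasDerivAt.log (hDne x)).const_mul (1 + q))
  set F : ℝ → ℝ := fun x => Real.exp (G 0 - G x) with hFdef
  have hF : ContDiff ℝ 2 F := (contDiff_const.sub hG).exp
  have hFpos : ∀ x, 0 < F x := fun x => Real.exp_pos _
  have hFper : Function.Periodic F 1 := fun x => by simp [hFdef, hGper x]
  have hFd : ∀ x, HasDerivAt F
      (F x * (0 - (2 * (deriv ψ0 x / ψ0 x) + (1 + q) * (deriv D x / D x)))) x := by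
    intro x
    have := ((hasDerivAt_const x (G 0)).sub (hGd x)).exp
    simpa [hFdef, mul_comm] using this
  set c₀ : ℝ := ∫ t in (0:ℝ)..1, F t with hc₀def
  have hc₀ : 0 < c₀ :=
    intervalIntegral.intervalIntegral_pos_of_pos (hF.continuous.intervalIntegrable 0 1)
      hFpos one_pos
  set w : ℝ → ℝ := fun x => -(F x / c₀) with hwdef
  have hwneg : ∀ x, w x < 0 := fun x => by
    simp only [hwdef]
    exact neg_neg_iff_pos.mpr (div_pos (hFpos x) hc₀)
  have hwC : ContDiff ℝ 2 w := ((hF.div_const c₀)).neg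
  have hwper : Function.Periodic w 1 := fun x => by simp [hwdef, hFper x]
  have hwd : ∀ x, HasDerivAt w
      (-(F x * (0 - (2 * (deriv ψ0 x / ψ0 x) + (1 + q) * (deriv D x / D x))) / c₀)) x :=
    fun x => ((hFd x).div_const c₀).neg
  have hwrel : ∀ x, D x * ψ0 x * deriv w x =
      -((2 * D x * deriv ψ0 x + (1 + q) * deriv D x * ψ0 x) * w x) := by
    intro x
    rw [(hwd x).deriv]
    simp only [hwdef]
    field_simp [hDne x, hψ0ne x]
    ring
  -- the corrector χ
  set χ : ℝ → ℝ := fun x => ∫ t in (0:ℝ)..x, (1 + w t) with hχdef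
  have hwc : Continuous (fun t => 1 + w t) := continuous_const.add hwC.continuous
  have hχd : ∀ x, HasDerivAt χ (1 + w x) x := fun x =>
    (hwc.integral_hasStrictDerivAt 0 x).hasDerivAt
  have hχdiff : Differentiable ℝ χ := fun x => (hχd x).differentiableAt
  have hχderiv : deriv χ = fun x => 1 + w x := funext fun x => (hχd x).deriv
  have hχ2 : ContDiff ℝ 2 χ := cd1_of_deriv hχdiff
    (contDiff_const.add (hwC.of_le (by norm_num))) hχderiv
  have hwint : ∀ a b : ℝ, IntervalIntegrable (fun t => 1 + w t) volume a b :=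
    fun a b => hwc.intervalIntegrable a b
  have hint01 : (∫ t in (0:ℝ)..1, (1 + w t)) = 0 := by
    have h1 : (∫ t in (0:ℝ)..1, (1 + w t)) =
        (∫ t in (0:ℝ)..1, (1:ℝ)) + ∫ t in (0:ℝ)..1, w t :=
      intervalIntegral.integral_add (continuous_const.intervalIntegrable 0 1)
        (hwC.continuous.intervalIntegrable 0 1)
    have h2 : (∫ t in (0:ℝ)..1, w t) = -(c₀ / c₀) := by
      simp only [hwdef]
      rw [intervalIntegral.integral_neg, intervalIntegral.integral_div]
    rw [h1, h2, div_self hc₀.ne']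
    simp
  have hχper : Function.Periodic χ 1 := by
    intro x
    have hadd : χ x + (∫ t in x..(x+1), (1 + w t)) = χ (x + 1) :=
      intervalIntegral.integral_add_adjacent_intervals (hwint 0 x) (hwint x (x+1))
    have hper' : (∫ t in x..(x+1), (1 + w t)) = ∫ t in (0:ℝ)..(0+1), (1 + w t) :=
      (Function.Periodic.intervalIntegral_add_eq (fun y => by simp [hwper y]) x 0)
    rw [← hadd, hper']
    simp only [zero_add, hint01]
    ring
  -- the eigenvalue-comparison weight D w²
  set f : ℝ → ℝ := fun x => D x * w x ^ 2 with hfdef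
  have hfc : Continuous f := (hD.continuous).mul (hwC.continuous.pow 2)
  have hfper : Function.Periodic f 1 := fun x => by simp [hfdef, hDper x, hwper x]
  have hfpos : ∀ x, 0 < f x := by
    intro x
    have h1 : w x ^ 2 = (-(w x)) ^ 2 := by ring
    exact mul_pos (hDpos x) (h1 ▸ pow_pos (neg_pos.mpr (hwneg x)) 2)
  obtain ⟨xm, hxm⟩ := periodic_exists_min hfc hfper
  obtain ⟨xM, hxM⟩ := periodic_exists_max hfc hfper
  refine ⟨f xm, f xM, hfpos xm, (hxm xM), ?_⟩
  intro lam
  -- the test function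
  set Ψ : ℝ → ℝ := fun x => ψ0 x * Real.exp (lam * χ x) with hΨdef
  have hΨ2 : ContDiff ℝ 2 Ψ := hψ2.mul ((contDiff_const.mul hχ2).exp)
  have hΨpos : ∀ x, 0 < Ψ x := fun x => mul_pos (hψpos x) (Real.exp_pos _)
  have hΨper : Function.Periodic Ψ 1 := fun x => by simp [hΨdef, hψper x, hχper x]
  have hΨd : ∀ x, HasDerivAt Ψ
      ((deriv ψ0 x + lam * (1 + w x) * ψ0 x) * Real.exp (lam * χ x)) x := by
    intro x
    have he : HasDerivAt (fun y => Real.exp (lam * χ y))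
        (Real.exp (lam * χ x) * (lam * (1 + w x))) x := by
      have := ((hχd x).const_mul lam).exp
      simpa [mul_comm] using this
    have : HasDerivAt (fun y => ψ0 y * Real.exp (lam * χ y)) _ x :=
      (cd2_diff hψ2 x).hasDerivAt.mul he
    convert this using 1
    ring
  have hΨd1 : deriv Ψ = fun x => (deriv ψ0 x + lam * (1 + w x) * ψ0 x) *
      Real.exp (lam * χ x) := funext fun x => (hΨd x).deriv
  have hwdiff : ∀ x, HasDerivAt w (deriv w x) x :=
    fun x => ((cd2_diff hwC) x).hasDerivAt
  have hΨd2 : ∀ x, deriv (deriv Ψ) x =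
      ((deriv (deriv ψ0) x + lam * (deriv w x * ψ0 x + (1 + w x) * deriv ψ0 x)) +
       (deriv ψ0 x + lam * (1 + w x) * ψ0 x) * (lam * (1 + w x))) *
        Real.exp (lam * χ x) := by
    intro x
    rw [hΨd1]
    have hu : HasDerivAt (fun y => deriv ψ0 y + lam * ((1 + w y) * ψ0 y))
        (deriv (deriv ψ0) x + lam * (deriv w x * ψ0 x + (1 + w x) * deriv ψ0 x)) x := by
      refine (cd2_deriv_diff hψ2 x).hasDerivAt.add (HasDerivAt.const_mul lam ?_)
      exact ((hwdiff x).const_add 1).mul (cd2_diff hψ2 x).hasDerivAt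
    have he : HasDerivAt (fun y => Real.exp (lam * χ y))
        (Real.exp (lam * χ x) * (lam * (1 + w x))) x := by
      have := ((hχd x).const_mul lam).exp
      simpa [mul_comm] using this
    have hprod : HasDerivAt
        (fun y => (deriv ψ0 y + lam * ((1 + w y) * ψ0 y)) * Real.exp (lam * χ y)) _ x :=
      hu.mul he
    have heq : (fun x => (deriv ψ0 x + lam * (1 + w x) * ψ0 x) * Real.exp (lam * χ x)) =
        (fun y => (deriv ψ0 y + lam * ((1 + w y) * ψ0 y)) * Real.exp (lam * χ y)) := by
      funext y; ring
    rw [heq, hprod.deriv]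
    ring
  have hmain : ∀ x, Lop q lam r D Ψ x = (k 0 + lam ^ 2 * f x) * Ψ x := by
    intro x
    have heig := hψeig x
    rw [Lop] at heig
    have hwr := hwrel x
    rw [Lop, hΨd2 x, hΨd1]
    simp only [hΨdef, hfdef]
    linear_combination Real.exp (lam * χ x) * heig + lam * Real.exp (lam * χ x) * hwr
  constructor
  · refine eig_ge_of_test q lam r D hDpos (hk lam) hΨ2 hΨpos hΨper ?_
    intro x
    rw [hmain x]
    have h1 : k 0 + f xm * lam ^ 2 ≤ k 0 + lam ^ 2 * f x := by
      nlinarith [hxm x, sq_nonneg lam]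
    exact mul_le_mul_of_nonneg_right h1 (hΨpos x).le
  · refine eig_le_of_test q lam r D hDpos (hk lam) hΨ2 hΨpos hΨper ?_
    intro x
    rw [hmain x]
    have h1 : k 0 + lam ^ 2 * f x ≤ k 0 + f xM * lam ^ 2 := by
      nlinarith [hxM x, sq_nonneg lam]
    exact mul_le_mul_of_nonneg_right h1 (hΨpos x).le

lemma amgm {a m l : ℝ} (ha : 0 ≤ a) (hm : 0 ≤ m) (hl : 0 < l) :
    2 * Real.sqrt (m * a) ≤ (a + m * l ^ 2) / l := by
  rw [le_div_iff₀ hl]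
  have h1 := sq_nonneg (Real.sqrt m * l - Real.sqrt a)
  have hm' := Real.sq_sqrt hm
  have ha' := Real.sq_sqrt ha
  have h2 : Real.sqrt (m * a) = Real.sqrt m * Real.sqrt a := Real.sqrt_mul hm a
  nlinarith [Real.sqrt_nonneg m, Real.sqrt_nonneg a]

/-- Proposition `compar_persist_speed`. If `k_q^0[r;D] > k_{q̃}^0[r;D] > 0`,
then there is `κ₀ ∈ (0, k_{q̃}^0)` such that for all `κ ∈ (κ₀, k_{q̃}^0)` the spreading
speeds satisfy `c_q*[r−κ;D] > c_{q̃}*[r−κ;D] > 0`. -/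
theorem stmt_5 (q qt : ℝ) (D r : ℝ → ℝ) (hD : ContDiff ℝ 2 D) (hDpos : ∀ x, 0 < D x)
    (hDper : Function.Periodic D 1) (hr : Continuous r) (hrper : Function.Periodic r 1)
    (k kt : ℝ → ℝ) (ψ φ : ℝ → ℝ → ℝ)
    (hk : ∀ lam : ℝ, IsEigenpair q lam r D (k lam) (ψ lam))
    (hkt : ∀ lam : ℝ, IsEigenpair qt lam r D (kt lam) (φ lam))
    (h0 : kt 0 < k 0) (h0' : 0 < kt 0) :
    ∃ κ₀ ∈ Set.Ioo 0 (kt 0), ∀ κ ∈ Set.Ioo κ₀ (kt 0),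
      (0 : EReal) < speed (fun l => kt l - κ) ∧
        speed (fun l => kt l - κ) < speed (fun l => k l - κ) := by
  obtain ⟨m, M, hm, hmM, hb⟩ := key_bounds q D r hD hDpos hDper k ψ hk
  obtain ⟨m', M', hm', hmM', hb'⟩ := key_bounds qt D r hD hDpos hDper kt φ hkt
  have hM' : 0 < M' := lt_of_lt_of_le hm' hmM'
  set c₁ : ℝ := 2 * Real.sqrt (m * (k 0 - kt 0)) with hc₁def
  have hc₁pos : 0 < c₁ := by
    have : 0 < m * (k 0 - kt 0) := mul_pos hm (by linarith)
    simp only [hc₁def]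
    positivity
  set κ₀ : ℝ := max (kt 0 - c₁ ^ 2 / (8 * M')) (kt 0 / 2) with hκ₀def
  have hκ₀pos : 0 < κ₀ := lt_max_of_lt_right (by linarith)
  have hκ₀lt : κ₀ < kt 0 := by
    apply max_lt
    · have : 0 < c₁ ^ 2 / (8 * M') := by positivity
      linarith
    · linarith
  refine ⟨κ₀, ⟨hκ₀pos, hκ₀lt⟩, ?_⟩
  rintro κ ⟨hκ1, hκ2⟩
  have hκpos : 0 < κ := lt_trans hκ₀pos hκ1
  have hε : 0 < kt 0 - κ := by linarith
  have hεsmall : kt 0 - κ < c₁ ^ 2 / (8 * M') := by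
    have h1 : kt 0 - c₁ ^ 2 / (8 * M') ≤ κ₀ := le_max_left _ _
    linarith
  -- lower bound for speed of kt
  have hlow' : ∀ l : {l : ℝ // 0 < l},
      ((2 * Real.sqrt (m' * (kt 0 - κ)) : ℝ) : EReal) ≤ (((kt l.1 - κ) / l.1 : ℝ) : EReal) := by
    rintro ⟨l, hl⟩
    have h1 : kt 0 + m' * l ^ 2 ≤ kt l := (hb' l).1
    have h2 : ((kt 0 - κ) + m' * l ^ 2) / l ≤ (kt l - κ) / l := by
      exact (div_le_div_iff_of_pos_right hl).mpr (by linarith)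
    have h3 := amgm hε.le hm'.le hl
    exact_mod_cast le_trans h3 h2
  have hlowk : ∀ l : {l : ℝ // 0 < l},
      ((c₁ : ℝ) : EReal) ≤ (((k l.1 - κ) / l.1 : ℝ) : EReal) := by
    rintro ⟨l, hl⟩
    have h1 : k 0 + m * l ^ 2 ≤ k l := (hb l).1
    have h2 : ((k 0 - κ) + m * l ^ 2) / l ≤ (k l - κ) / l := by
      exact (div_le_div_iff_of_pos_right hl).mpr (by linarith)
    have h3 := amgm (by linarith : (0:ℝ) ≤ k 0 - κ) hm.le hl
    have h4 : c₁ ≤ 2 * Real.sqrt (m * (k 0 - κ)) := by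
      rw [hc₁def]
      have := Real.sqrt_le_sqrt (by nlinarith : m * (k 0 - kt 0) ≤ m * (k 0 - κ))
      linarith
    exact_mod_cast le_trans h4 (le_trans h3 h2)
  constructor
  · -- 0 < speed (kt - κ)
    have hbpos : (0:ℝ) < 2 * Real.sqrt (m' * (kt 0 - κ)) := by
      have : 0 < m' * (kt 0 - κ) := mul_pos hm' hε
      positivity
    calc (0 : EReal) < ((2 * Real.sqrt (m' * (kt 0 - κ)) : ℝ) : EReal) := by
          exact_mod_cast hbpos
      _ ≤ speed (fun l => kt l - κ) := le_iInf hlow'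
  · -- speed (kt - κ) < speed (k - κ)
    set l₀ : ℝ := Real.sqrt ((kt 0 - κ) / M') with hl₀def
    have hl₀pos : 0 < l₀ := Real.sqrt_pos.mpr (div_pos hε hM')
    have hl₀sq : l₀ ^ 2 = (kt 0 - κ) / M' := Real.sq_sqrt (div_pos hε hM').le
    have hval : (kt l₀ - κ) / l₀ ≤ 2 * Real.sqrt ((kt 0 - κ) * M') := by
      have h1 : kt l₀ ≤ kt 0 + M' * l₀ ^ 2 := (hb' l₀).2
      have h2 : M' * l₀ ^ 2 = kt 0 - κ := by
        rw [hl₀sq]; field_simp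
      have h3 : (kt l₀ - κ) / l₀ ≤ (2 * (kt 0 - κ)) / l₀ := by
        exact (div_le_div_iff_of_pos_right hl₀pos).mpr (by linarith)
      have h4 : l₀ * Real.sqrt ((kt 0 - κ) * M') = kt 0 - κ := by
        rw [hl₀def, ← Real.sqrt_mul (div_pos hε hM').le]
        rw [show (kt 0 - κ) / M' * ((kt 0 - κ) * M') = (kt 0 - κ) ^ 2 by
          field_simp]
        exact Real.sqrt_sq hε.le
      have h5 : (2 * (kt 0 - κ)) / l₀ = 2 * Real.sqrt ((kt 0 - κ) * M') := by
        rw [eq_comm, eq_div_iff hl₀pos.ne']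
        linear_combination 2 * h4
      linarith [h3, h5.le, h5.ge]
    have hstrict : 2 * Real.sqrt ((kt 0 - κ) * M') < c₁ := by
      have h8 : (kt 0 - κ) * (8 * M') < c₁ ^ 2 := by
        rw [← lt_div_iff₀ (by positivity)]
        exact hεsmall
      have h4 : 4 * ((kt 0 - κ) * M') < c₁ ^ 2 := by nlinarith [sq_nonneg c₁]
      have heq : Real.sqrt (4 * ((kt 0 - κ) * M')) = 2 * Real.sqrt ((kt 0 - κ) * M') := by
        rw [show (4:ℝ) * ((kt 0 - κ) * M') = 2 ^ 2 * ((kt 0 - κ) * M') by ring,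
          Real.sqrt_mul (by norm_num : (0:ℝ) ≤ 2 ^ 2), Real.sqrt_sq (by norm_num : (0:ℝ) ≤ 2)]
      rw [← heq]
      calc Real.sqrt (4 * ((kt 0 - κ) * M')) < Real.sqrt (c₁ ^ 2) :=
            Real.sqrt_lt_sqrt (by positivity) h4
        _ = c₁ := Real.sqrt_sq hc₁pos.le
    calc speed (fun l => kt l - κ) ≤ (((kt l₀ - κ) / l₀ : ℝ) : EReal) :=
          iInf_le _ (⟨l₀, hl₀pos⟩ : {l : ℝ // 0 < l})
      _ ≤ ((2 * Real.sqrt ((kt 0 - κ) * M') : ℝ) : EReal) := by exact_mod_cast hval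
      _ < ((c₁ : ℝ) : EReal) := by exact_mod_cast hstrict
      _ ≤ speed (fun l => k l - κ) := le_iInf hlowk
end
end

section
/- Fix q ∈ ℝ, a positive, 1-periodic, C² function D and a continuous 1-periodic function r. Suppose that for every B > 0 we are given k(B) ∈ ℝ and a positive, 1-periodic, C² function ψ_B with L_q^0[r; B·D]ψ_B = k(B)·ψ_B. Then k(B) → (∫₀¹ r(x)·D(x)^{−q} dx) / (∫₀¹ D(x)^{−q} dx) as B → +∞. -/
open Real MeasureTheory Set Filter Topology

noncomputable section

lemma smooth2 {f : ℝ → ℝ} (h : ContDiff ℝ 2 f) :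
    Differentiable ℝ f ∧ Differentiable ℝ (deriv f) ∧ Continuous (deriv (deriv f)) := by
  rw [show (2 : WithTop ℕ∞) = 1 + 1 by norm_num, contDiff_succ_iff_deriv] at h
  obtain ⟨h1, -, h2⟩ := h
  rw [contDiff_one_iff_deriv] at h2
  exact ⟨h1, h2.1, h2.2⟩

lemma per_deriv {f : ℝ → ℝ} (h : Function.Periodic f 1) : Function.Periodic (deriv f) 1 := by
  intro x
  have hf : (fun y => f (y + 1)) = f := funext h
  rw [← deriv_comp_add_const, hf]

lemma F_hasDeriv {q B k : ℝ} {D r ψ : ℝ → ℝ} (hB : B ≠ 0)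
    (hD : ContDiff ℝ 2 D) (hψ : ContDiff ℝ 2 ψ)
    (heq : ∀ x, Lop q 0 r (fun x => B * D x) ψ x = k * ψ x) (x : ℝ) :
    HasDerivAt (fun y => D y * deriv ψ y + q * (deriv D y * ψ y))
      ((k - r x) * ψ x / B) x := by
  obtain ⟨hD1, hD2, hD3⟩ := smooth2 hD
  obtain ⟨hψ1, hψ2, hψ3⟩ := smooth2 hψ
  have h1 : HasDerivAt (fun y => D y * deriv ψ y)
      (deriv D x * deriv ψ x + D x * deriv (deriv ψ) x) x :=
    (hD1 x).hasDerivAt.mul (hψ2 x).hasDerivAt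
  have h2 : HasDerivAt (fun y => q * (deriv D y * ψ y))
      (q * (deriv (deriv D) x * ψ x + deriv D x * deriv ψ x)) x :=
    ((hD2 x).hasDerivAt.mul (hψ1 x).hasDerivAt).const_mul q
  have h := h1.add h2
  refine h.congr_deriv ?_
  have he := heq x
  simp only [Lop] at he
  have e1 : (deriv fun x => B * D x) = fun x => B * deriv D x := deriv_const_mul_field' B
  rw [e1] at he
  have e2 : (deriv fun x => B * deriv D x) = fun x => B * deriv (deriv D) x :=
    deriv_const_mul_field' B
  rw [e2] at he
  beta_reduce at he
  rw [eq_div_iff hB]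
  linear_combination he

lemma kform {q B k : ℝ} {D r ψ : ℝ → ℝ} (hB : B ≠ 0)
    (hD : ContDiff ℝ 2 D) (hψ : ContDiff ℝ 2 ψ)
    (hDper : Function.Periodic D 1) (hψper : Function.Periodic ψ 1)
    (hr : Continuous r)
    (heq : ∀ x, Lop q 0 r (fun x => B * D x) ψ x = k * ψ x) :
    k * ∫ x in (0:ℝ)..1, ψ x = ∫ x in (0:ℝ)..1, r x * ψ x := by
  obtain ⟨hD1, hD2, hD3⟩ := smooth2 hD
  obtain ⟨hψ1, hψ2, hψ3⟩ := smooth2 hψ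
  set F : ℝ → ℝ := fun y => D y * deriv ψ y + q * (deriv D y * ψ y) with hFdef
  have hFper : Function.Periodic F 1 := fun x => by
    simp only [hFdef, hDper x, hψper x, per_deriv hDper x, per_deriv hψper x]
  have hcont : Continuous fun x => (k - r x) * ψ x / B :=
    (((continuous_const.sub hr).mul hψ1.continuous).div_const B)
  have hint : ∫ x in (0:ℝ)..1, (k - r x) * ψ x / B = F 1 - F 0 :=
    intervalIntegral.integral_eq_sub_of_hasDerivAt
      (fun x _ => F_hasDeriv hB hD hψ heq x) (hcont.intervalIntegrable 0 1)
  have hF10 : F 1 - F 0 = 0 := by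
    have := hFper 0
    simp only [zero_add] at this
    rw [this]; ring
  rw [hF10] at hint
  have : ∫ x in (0:ℝ)..1, (k - r x) * ψ x / B
      = ((k * ∫ x in (0:ℝ)..1, ψ x) - ∫ x in (0:ℝ)..1, r x * ψ x) / B := by
    rw [eq_div_iff hB, ← intervalIntegral.integral_mul_const]
    rw [← intervalIntegral.integral_const_mul, ← intervalIntegral.integral_sub]
    · exact intervalIntegral.integral_congr fun x _ => by field_simp
    · exact (continuous_const.mul hψ1.continuous).intervalIntegrable _ _
    · exact (hr.mul hψ1.continuous).intervalIntegrable _ _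
  rw [this] at hint
  have := (div_eq_zero_iff.mp hint).resolve_right hB
  linarith

lemma core {q B : ℝ} (hB : 0 < B) {D r ψ : ℝ → ℝ} {k : ℝ}
    (hD : ContDiff ℝ 2 D) (hDpos : ∀ x, 0 < D x) (hDper : Function.Periodic D 1)
    (hr : Continuous r)
    (hψ : ContDiff ℝ 2 ψ) (hψpos : ∀ x, 0 < ψ x) (hψper : Function.Periodic ψ 1)
    (heq : ∀ x, Lop q 0 r (fun x => B * D x) ψ x = k * ψ x)
    {M c1 cq : ℝ} (hM : ∀ x, |r x| ≤ M) (hc1 : ∀ x, D x ^ (q - 1) ≤ c1)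
    (hcq : ∀ x, D x ^ (-q) ≤ cq)
    {g : ℝ → ℝ} (hg : Continuous g) {G : ℝ} (hG : ∀ x, |g x| ≤ G) :
    |(∫ x in (0:ℝ)..1, g x * (D x ^ q * ψ x)) / (∫ x in (0:ℝ)..1, D x ^ q * ψ x)
      - ∫ x in (0:ℝ)..1, g x| ≤ G * (2 * M * c1 * cq) / B := by
  obtain ⟨hD1, hD2, hD3⟩ := smooth2 hD
  obtain ⟨hψ1, hψ2, hψ3⟩ := smooth2 hψ
  have hM0 : 0 ≤ M := le_trans (abs_nonneg _) (hM 0)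
  have hG0 : 0 ≤ G := le_trans (abs_nonneg _) (hG 0)
  have hc10 : 0 < c1 := lt_of_lt_of_le (rpow_pos_of_pos (hDpos 0) _) (hc1 0)
  have hcq0 : 0 < cq := lt_of_lt_of_le (rpow_pos_of_pos (hDpos 0) _) (hcq 0)
  set u : ℝ → ℝ := fun x => D x ^ q * ψ x with hudef
  have hucont : Continuous u :=
    (hD.continuous.rpow_const fun x => Or.inl (hDpos x).ne').mul hψ1.continuous
  have hupos : ∀ x, 0 < u x := fun x =>
    mul_pos (rpow_pos_of_pos (hDpos x) q) (hψpos x)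
  have huper : Function.Periodic u 1 := fun x => by
    simp only [hudef, hDper x, hψper x]
  set I : ℝ := ∫ x in (0:ℝ)..1, u x with hIdef
  set J : ℝ := ∫ x in (0:ℝ)..1, ψ x with hJdef
  have hI : 0 < I := intervalIntegral.intervalIntegral_pos_of_pos_on
    (hucont.intervalIntegrable 0 1) (fun x _ => hupos x) one_pos
  have hJ : 0 < J := intervalIntegral.intervalIntegral_pos_of_pos_on
    (hψ1.continuous.intervalIntegrable 0 1) (fun x _ => hψpos x) one_pos
  set F : ℝ → ℝ := fun y => D y * deriv ψ y + q * (deriv D y * ψ y) with hFdef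
  have hF : ∀ x, HasDerivAt F ((k - r x) * ψ x / B) x := F_hasDeriv hB.ne' hD hψ heq
  have hFper : Function.Periodic F 1 := fun x => by
    simp only [hFdef, hDper x, hψper x, per_deriv hDper x, per_deriv hψper x]
  -- derivative of u
  have hu : ∀ x, HasDerivAt u (D x ^ (q - 1) * F x) x := by
    intro x
    have hDq : HasDerivAt (fun y => D y ^ q) (deriv D x * q * D x ^ (q - 1)) x :=
      (hD1 x).hasDerivAt.rpow_const (Or.inl (hDpos x).ne')
    have h := hDq.mul (hψ1 x).hasDerivAt
    refine h.congr_deriv ?_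
    have hq : D x ^ (q - 1) * D x = D x ^ q := by
      rw [rpow_sub_one (hDpos x).ne', div_mul_cancel₀ _ (hDpos x).ne']
    show _ = D x ^ (q - 1) * (D x * deriv ψ x + q * (deriv D x * ψ x))
    linear_combination -(deriv ψ x * hq)
  -- |k| ≤ M
  have hkJ : k * J = ∫ x in (0:ℝ)..1, r x * ψ x := kform hB.ne' hD hψ hDper hψper hr heq
  have hkM : |k| ≤ M := by
    have h1 : |∫ x in (0:ℝ)..1, r x * ψ x| ≤ ∫ x in (0:ℝ)..1, M * ψ x := by
      calc |∫ x in (0:ℝ)..1, r x * ψ x| ≤ ∫ x in (0:ℝ)..1, |r x * ψ x| :=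
            intervalIntegral.abs_integral_le_integral_abs zero_le_one
        _ ≤ ∫ x in (0:ℝ)..1, M * ψ x := by
            apply intervalIntegral.integral_mono_on zero_le_one
              ((hr.mul hψ1.continuous).abs.intervalIntegrable 0 1)
              ((continuous_const.mul hψ1.continuous).intervalIntegrable 0 1)
            intro x _
            simp only [Pi.mul_apply]
            rw [abs_mul, abs_of_pos (hψpos x)]
            exact mul_le_mul_of_nonneg_right (hM x) (hψpos x).le
    rw [intervalIntegral.integral_const_mul] at h1
    rw [← hkJ, abs_mul, abs_of_pos hJ] at h1
    exact le_of_mul_le_mul_right h1 hJ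
  -- zero of F
  obtain ⟨x₀, hx₀mem, hx₀⟩ : ∃ c ∈ Ioo (0:ℝ) 1, deriv u c = (u 1 - u 0) / (1 - 0) :=
    exists_deriv_eq_slope u one_pos (hucont.continuousOn)
      (fun x _ => ((hu x).differentiableAt).differentiableWithinAt)
  have hF0 : F x₀ = 0 := by
    have h10 : u 1 = u 0 := by have := huper 0; simpa using this
    rw [h10, sub_self, zero_div] at hx₀
    rw [(hu x₀).deriv] at hx₀
    rcases mul_eq_zero.mp hx₀ with h | h
    · exact absurd h (rpow_pos_of_pos (hDpos x₀) _).ne'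
    · exact h
  -- bound on F on [x₀, x₀+1]
  have hFbd : ∀ y ∈ Icc x₀ (x₀ + 1), |F y| ≤ 2 * M * J / B := by
    intro y hy
    have hxy : x₀ ≤ y := hy.1
    have heq1 : ∫ t in x₀..y, (k - r t) * ψ t / B = F y - F x₀ :=
      intervalIntegral.integral_eq_sub_of_hasDerivAt (fun t _ => hF t)
        ((((continuous_const.sub hr).mul hψ1.continuous).div_const B).intervalIntegrable x₀ y)
    have hper : (∫ t in x₀..(x₀+1), ψ t) = J := by
      have := hψper.intervalIntegral_add_eq x₀ 0
      simpa using this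
    have hbound : |F y| ≤ ∫ t in x₀..y, 2 * M * ψ t / B := by
      rw [← sub_zero (F y), ← hF0, ← heq1]
      calc |∫ t in x₀..y, (k - r t) * ψ t / B| ≤ ∫ t in x₀..y, |(k - r t) * ψ t / B| :=
            intervalIntegral.abs_integral_le_integral_abs hxy
        _ ≤ ∫ t in x₀..y, 2 * M * ψ t / B := by
            apply intervalIntegral.integral_mono_on hxy
              ((((continuous_const.sub hr).mul hψ1.continuous).div_const B).abs.intervalIntegrable x₀ y)
              (((continuous_const.mul hψ1.continuous).div_const B).intervalIntegrable x₀ y)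
            intro t _
            simp only [Pi.mul_apply, Pi.sub_apply]
            rw [abs_div, abs_of_pos hB, abs_mul, abs_of_pos (hψpos t)]
            have hkr : |k - r t| ≤ 2 * M := by
              calc |k - r t| ≤ |k| + |r t| := abs_sub _ _
                _ ≤ 2 * M := by linarith [hkM, hM t]
            gcongr
            exact (hψpos t).le
    refine hbound.trans ?_
    have hmono : (∫ t in x₀..y, 2 * M * ψ t / B) ≤ ∫ t in x₀..(x₀+1), 2 * M * ψ t / B := by
      apply intervalIntegral.integral_mono_interval le_rfl hxy hy.2
      · filter_upwards with t
        exact div_nonneg (mul_nonneg (by linarith) (hψpos t).le) hB.le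
      · exact (((continuous_const.mul hψ1.continuous).div_const B).intervalIntegrable _ _)
    refine hmono.trans ?_
    have : (∫ t in x₀..(x₀+1), 2 * M * ψ t / B) = (2 * M / B) * ∫ t in x₀..(x₀+1), ψ t := by
      rw [← intervalIntegral.integral_const_mul]
      congr 1; funext t; ring
    rw [this, hper]; ring_nf; rfl
  -- bound on F on [0,1]
  have hFbd' : ∀ x ∈ Icc (0:ℝ) 1, |F x| ≤ 2 * M * J / B := by
    intro x hx
    rcases le_or_gt x₀ x with h | h
    · exact hFbd x ⟨h, by linarith [hx.2, hx₀mem.1]⟩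
    · have := hFbd (x + 1) ⟨by linarith [hx.1, hx₀mem.2], by linarith⟩
      rwa [hFper x] at this
  set ε : ℝ := c1 * (2 * M * J / B) with hεdef
  have hε0 : 0 ≤ ε := by positivity
  -- oscillation of u
  have hosc : ∀ x ∈ Icc (0:ℝ) 1, ∀ y ∈ Icc (0:ℝ) 1, |u y - u x| ≤ ε := by
    intro x hx y hy
    have hbd : ∀ z ∈ Icc (0:ℝ) 1, ‖D z ^ (q - 1) * F z‖ ≤ ε := by
      intro z hz
      rw [Real.norm_eq_abs, abs_mul, abs_of_pos (rpow_pos_of_pos (hDpos z) _)]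
      exact mul_le_mul (hc1 z) (hFbd' z hz) (abs_nonneg _) hc10.le
    have := (convex_Icc (0:ℝ) 1).norm_image_sub_le_of_norm_hasDerivWithin_le
      (fun z hz => (hu z).hasDerivWithinAt) hbd hx hy
    calc |u y - u x| ≤ ε * ‖y - x‖ := this
      _ ≤ ε * 1 := by
          apply mul_le_mul_of_nonneg_left ?_ hε0
          rw [Real.norm_eq_abs, abs_le]
          constructor <;> [linarith [hx.2, hy.1]; linarith [hx.1, hy.2]]
      _ = ε := mul_one ε
  -- points where u is below/above its mean
  have hmean : ∀ x ∈ Icc (0:ℝ) 1, |u x - I| ≤ ε := by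
    have hIc : (∫ x in (0:ℝ)..1, I) = I := by simp
    have hlow : ∃ a ∈ Icc (0:ℝ) 1, u a ≤ I := by
      by_contra hcon
      push_neg at hcon
      have : 0 < ∫ x in (0:ℝ)..1, (u x - I) := by
        apply intervalIntegral.intervalIntegral_pos_of_pos_on
          ((hucont.sub continuous_const).intervalIntegrable 0 1)
          (fun x hx => sub_pos.mpr (hcon x (Ioo_subset_Icc_self hx))) one_pos
      rw [intervalIntegral.integral_sub (hucont.intervalIntegrable 0 1)
        (continuous_const.intervalIntegrable 0 1), hIc] at this
      simp only [← hIdef] at this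
      linarith
    have hhigh : ∃ b ∈ Icc (0:ℝ) 1, I ≤ u b := by
      by_contra hcon
      push_neg at hcon
      have : 0 < ∫ x in (0:ℝ)..1, (I - u x) := by
        apply intervalIntegral.intervalIntegral_pos_of_pos_on
          ((continuous_const.sub hucont).intervalIntegrable 0 1)
          (fun x hx => sub_pos.mpr (hcon x (Ioo_subset_Icc_self hx))) one_pos
      rw [intervalIntegral.integral_sub (continuous_const.intervalIntegrable 0 1)
        (hucont.intervalIntegrable 0 1), hIc] at this
      simp only [← hIdef] at this
      linarith
    obtain ⟨a, ha, hua⟩ := hlow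
    obtain ⟨b, hb, hub⟩ := hhigh
    intro x hx
    have h1 := abs_le.mp (hosc a ha x hx)
    have h2 := abs_le.mp (hosc b hb x hx)
    rw [abs_le]
    constructor <;> linarith [h1.2, h2.1]
  -- J ≤ cq * I
  have hψu : ∀ x, ψ x = D x ^ (-q) * u x := by
    intro x
    have h1 : D x ^ (-q) * D x ^ q = 1 := by
      rw [← rpow_add (hDpos x)]; simp
    simp only [hudef]
    rw [← mul_assoc, h1, one_mul]
  have hJI : J ≤ cq * I := by
    have : (∫ x in (0:ℝ)..1, ψ x) ≤ ∫ x in (0:ℝ)..1, cq * u x := by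
      apply intervalIntegral.integral_mono_on zero_le_one
        (hψ1.continuous.intervalIntegrable 0 1)
        ((continuous_const.mul hucont).intervalIntegrable 0 1)
      intro x _
      rw [hψu x]
      exact mul_le_mul_of_nonneg_right (hcq x) (hupos x).le
    rwa [intervalIntegral.integral_const_mul] at this
  -- numerator estimate
  have hrw : (∫ x in (0:ℝ)..1, g x * (u x - I))
      = (∫ x in (0:ℝ)..1, g x * u x) - I * ∫ x in (0:ℝ)..1, g x := by
    calc (∫ x in (0:ℝ)..1, g x * (u x - I))
        = ∫ x in (0:ℝ)..1, (g x * u x - I * g x) :=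
          intervalIntegral.integral_congr fun x _ => by ring
      _ = (∫ x in (0:ℝ)..1, g x * u x) - ∫ x in (0:ℝ)..1, I * g x :=
          intervalIntegral.integral_sub ((hg.mul hucont).intervalIntegrable 0 1)
            ((continuous_const.mul hg).intervalIntegrable 0 1)
      _ = (∫ x in (0:ℝ)..1, g x * u x) - I * ∫ x in (0:ℝ)..1, g x := by
          rw [intervalIntegral.integral_const_mul]
  have hnum : |(∫ x in (0:ℝ)..1, g x * u x) - I * ∫ x in (0:ℝ)..1, g x| ≤ G * ε := by
    rw [← hrw]
    calc |∫ x in (0:ℝ)..1, g x * (u x - I)| ≤ ∫ x in (0:ℝ)..1, |g x * (u x - I)| :=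
          intervalIntegral.abs_integral_le_integral_abs zero_le_one
      _ ≤ ∫ x in (0:ℝ)..1, G * ε := by
          apply intervalIntegral.integral_mono_on zero_le_one
            ((hg.mul (hucont.sub continuous_const)).abs.intervalIntegrable 0 1)
            (continuous_const.intervalIntegrable 0 1)
          intro x hx
          simp only [Pi.mul_apply, Pi.sub_apply]
          rw [abs_mul]
          exact mul_le_mul (hG x) (hmean x hx) (abs_nonneg _) hG0
      _ = G * ε := by simp
  -- conclusion
  have hsplit : (∫ x in (0:ℝ)..1, g x * u x) / I - (∫ x in (0:ℝ)..1, g x)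
      = ((∫ x in (0:ℝ)..1, g x * u x) - I * ∫ x in (0:ℝ)..1, g x) / I := by
    field_simp
  have hstep1 : |(∫ x in (0:ℝ)..1, g x * u x) / I - ∫ x in (0:ℝ)..1, g x| ≤ G * ε / I := by
    rw [hsplit, abs_div, abs_of_pos hI]
    gcongr
  have hstep2 : G * ε / I ≤ G * (2 * M * c1 * cq) / B := by
    rw [div_le_div_iff₀ hI hB]
    have hεB : ε * B = c1 * (2 * M * J) := by rw [hεdef]; field_simp
    have h1 : (0 : ℝ) ≤ G * c1 * (2 * M) := by positivity
    have h2 := mul_le_mul_of_nonneg_left hJI h1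
    nlinarith [hεB, h2]
  calc |(∫ x in (0:ℝ)..1, g x * (D x ^ q * ψ x)) / (∫ x in (0:ℝ)..1, D x ^ q * ψ x)
      - ∫ x in (0:ℝ)..1, g x|
      = |(∫ x in (0:ℝ)..1, g x * u x) / I - ∫ x in (0:ℝ)..1, g x| := rfl
    _ ≤ G * ε / I := hstep1
    _ ≤ G * (2 * M * c1 * cq) / B := hstep2

lemma per_bound {f : ℝ → ℝ} (hf : Continuous f) (hper : Function.Periodic f 1) :
    ∃ M, ∀ x, f x ≤ M := by
  obtain ⟨xm, -, hxm⟩ := isCompact_Icc.exists_isMaxOn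
    (Set.nonempty_Icc.mpr zero_le_one) hf.continuousOn
  refine ⟨f xm, fun x => ?_⟩
  obtain ⟨y, hy, hxy⟩ := hper.exists_mem_Ico₀ one_pos x
  rw [hxy]
  exact hxm (Ico_subset_Icc_self hy)

/-- Proposition `largeD`. The principal eigenvalue of `L_q^0[r; B·D]`
converges, as `B → +∞`, to the `D^{−q}`-weighted mean of `r`. -/
theorem stmt_6 (q : ℝ) (D r : ℝ → ℝ) (hD : ContDiff ℝ 2 D) (hDpos : ∀ x, 0 < D x)
    (hDper : Function.Periodic D 1) (hr : Continuous r) (hrper : Function.Periodic r 1)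
    (k : ℝ → ℝ) (ψ : ℝ → ℝ → ℝ)
    (hk : ∀ B > (0 : ℝ), IsEigenpair q 0 r (fun x => B * D x) (k B) (ψ B)) :
    Tendsto k atTop
      (𝓝 ((∫ x in (0:ℝ)..1, r x * D x ^ (-q)) / ∫ x in (0:ℝ)..1, D x ^ (-q))) := by
  have hDq : Continuous fun x => D x ^ (-q) :=
    hD.continuous.rpow_const fun x => Or.inl (hDpos x).ne'
  have hDq1 : Continuous fun x => D x ^ (q - 1) :=
    hD.continuous.rpow_const fun x => Or.inl (hDpos x).ne'
  obtain ⟨M, hM⟩ := per_bound hr.abs (fun x => by simp only [Function.comp, hrper x])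
  obtain ⟨c1, hc1⟩ := per_bound hDq1 (fun x => by simp only [hDper x])
  obtain ⟨cq, hcq⟩ := per_bound hDq (fun x => by simp only [hDper x])
  have hM0 : 0 ≤ M := le_trans (abs_nonneg _) (hM 0)
  have hcq0 : 0 < cq := lt_of_lt_of_le (rpow_pos_of_pos (hDpos 0) _) (hcq 0)
  set N : ℝ := ∫ x in (0:ℝ)..1, r x * D x ^ (-q) with hNdef
  set Dn : ℝ := ∫ x in (0:ℝ)..1, D x ^ (-q) with hDndef
  have hDn : 0 < Dn := intervalIntegral.intervalIntegral_pos_of_pos_on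
    (hDq.intervalIntegrable 0 1) (fun x _ => rpow_pos_of_pos (hDpos x) _) one_pos
  set n : ℝ → ℝ := fun B =>
    (∫ x in (0:ℝ)..1, (r x * D x ^ (-q)) * (D x ^ q * ψ B x)) /
      (∫ x in (0:ℝ)..1, D x ^ q * ψ B x) with hndef
  set d : ℝ → ℝ := fun B =>
    (∫ x in (0:ℝ)..1, (D x ^ (-q)) * (D x ^ q * ψ B x)) /
      (∫ x in (0:ℝ)..1, D x ^ q * ψ B x) with hddef
  -- bounds for the two weights
  have hg1 : ∀ x, |r x * D x ^ (-q)| ≤ M * cq := by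
    intro x
    rw [abs_mul]
    exact mul_le_mul (hM x) (le_trans (le_of_eq (abs_of_pos (rpow_pos_of_pos (hDpos x) _)))
      (hcq x)) (abs_nonneg _) hM0
  have hg2 : ∀ x, |D x ^ (-q)| ≤ cq := fun x => by
    rw [abs_of_pos (rpow_pos_of_pos (hDpos x) _)]; exact hcq x
  -- convergence of numerator and denominator
  have htend : ∀ (m : ℝ → ℝ) (L K : ℝ), (∀ B > (0:ℝ), |m B - L| ≤ K / B) →
      Tendsto m atTop (𝓝 L) := by
    intro m L K hbd
    rw [tendsto_iff_norm_sub_tendsto_zero]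
    apply squeeze_zero' (Eventually.of_forall fun B => norm_nonneg _)
    · filter_upwards [eventually_gt_atTop (0:ℝ)] with B hB
      exact hbd B hB
    · exact tendsto_const_nhds.div_atTop tendsto_id
  have hnt : Tendsto n atTop (𝓝 N) := by
    apply htend n N ((M * cq) * (2 * M * c1 * cq))
    intro B hB
    obtain ⟨hψC, hψpos, hψper, heqB⟩ := hk B hB
    exact core hB hD hDpos hDper hr hψC hψpos hψper heqB hM hc1 hcq
      (hr.mul hDq) hg1
  have hdt : Tendsto d atTop (𝓝 Dn) := by
    apply htend d Dn (cq * (2 * M * c1 * cq))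
    intro B hB
    obtain ⟨hψC, hψpos, hψper, heqB⟩ := hk B hB
    exact core hB hD hDpos hDper hr hψC hψpos hψper heqB hM hc1 hcq hDq hg2
  -- k agrees with n / d eventually
  have hev : (fun B => n B / d B) =ᶠ[atTop] k := by
    filter_upwards [eventually_gt_atTop (0:ℝ)] with B hB
    obtain ⟨hψC, hψpos, hψper, heqB⟩ := hk B hB
    have hψu : ∀ x, D x ^ (-q) * (D x ^ q * ψ B x) = ψ B x := by
      intro x
      have h1 : D x ^ (-q) * D x ^ q = 1 := by
        rw [← rpow_add (hDpos x)]; simp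
      rw [← mul_assoc, h1, one_mul]
    have hucont : Continuous fun x => D x ^ q * ψ B x :=
      (hD.continuous.rpow_const fun x => Or.inl (hDpos x).ne').mul hψC.continuous
    have hI : 0 < ∫ x in (0:ℝ)..1, D x ^ q * ψ B x :=
      intervalIntegral.intervalIntegral_pos_of_pos_on (hucont.intervalIntegrable 0 1)
        (fun x _ => mul_pos (rpow_pos_of_pos (hDpos x) _) (hψpos x)) one_pos
    have hJ : 0 < ∫ x in (0:ℝ)..1, ψ B x :=
      intervalIntegral.intervalIntegral_pos_of_pos_on
        (hψC.continuous.intervalIntegrable 0 1) (fun x _ => hψpos x) one_pos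
    have hdenom : (∫ x in (0:ℝ)..1, (D x ^ (-q)) * (D x ^ q * ψ B x))
        = ∫ x in (0:ℝ)..1, ψ B x :=
      intervalIntegral.integral_congr fun x _ => hψu x
    have hnum : (∫ x in (0:ℝ)..1, (r x * D x ^ (-q)) * (D x ^ q * ψ B x))
        = ∫ x in (0:ℝ)..1, r x * ψ B x :=
      intervalIntegral.integral_congr fun x _ => by rw [mul_assoc, hψu x]
    have hkf := kform hB.ne' hD hψC hDper hψper hr heqB
    simp only [hndef, hddef]
    rw [hdenom, hnum, ← hkf]
    field_simp
  exact Tendsto.congr' hev (hnt.div hdt hDn.ne')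
end
end
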